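/- arXiv:2503.13001 — 2 statements merged into one kernel-verified Lean document; each statement's English description precedes it below -/
import Mathlib

section
/- Let v ∈ ℝ² and let f : ℝ² → ℝ be a v-function with exactly three pieces P₀, P₁, P₂ whose affine components are f₀, f₁, f₂. Then there exist signs σ₁, σ₂ ∈ {−1, 1} and affine functions g₁, g₂, g₃ : ℝ² → ℝ, each of which belongs to the set {f₀, f₁, f₂, −f₀, −f₁, −f₂}, such that f(x) = σ₁ · max( g₁(x), σ₂ · max( g₂(x), g₃(x) ) ) for all x ∈ ℝ². -/
open Set

noncomputable section

/-- The plane `ℝ²`, modeled as functions `Fin 2 → ℝ`. -/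
abbrev E2 := Fin 2 → ℝ

/-- `f : ℝ² → ℝ` is affine: `f x = ⟨a, x⟩ + b`. -/
def IsAffineFn (f : E2 → ℝ) : Prop :=
  ∃ (a : E2) (b : ℝ), ∀ x, f x = dotProduct a x + b

/-- `f : ℝ² → ℝ` is linear: `f x = ⟨a, x⟩`. -/
def IsLinearFn (f : E2 → ℝ) : Prop :=
  ∃ a : E2, ∀ x, f x = dotProduct a x

/-- An affine line in the plane. -/
def IsLine (l : Set E2) : Prop :=
  ∃ v u : E2, u ≠ 0 ∧ l = {x | ∃ t : ℝ, x = v + t • u}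

/-- A polygonal piece: a regular closed set with nonempty connected interior whose
frontier is contained in a finite union of affine lines. -/
def IsPolygonalPiece (P : Set E2) : Prop :=
  IsClosed P ∧ (interior P).Nonempty ∧ IsConnected (interior P) ∧
    P = closure (interior P) ∧
    ∃ (m : ℕ) (L : Fin m → Set E2), (∀ i, IsLine (L i)) ∧ frontier P ⊆ ⋃ i, L i

/-- `Ps` is an admissible family of pieces for `f`. -/
def IsAdmissible (f : E2 → ℝ) (Ps : Finset (Set E2)) : Prop :=
  (∀ P ∈ Ps, IsPolygonalPiece P) ∧
  (⋃ P ∈ Ps, P) = univ ∧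
  (∀ P ∈ Ps, ∀ Q ∈ Ps, P ≠ Q → P ∩ Q = frontier P ∩ frontier Q) ∧
  (∀ P ∈ Ps, ∃ g : E2 → ℝ, IsAffineFn g ∧ EqOn f g P)

/-- `f` is continuous piecewise affine with (at most) `p` pieces. -/
def IsCPA (p : ℕ) (f : E2 → ℝ) : Prop :=
  Continuous f ∧ ∃ Ps : Finset (Set E2), Ps.card ≤ p ∧ IsAdmissible f Ps

/-- `P` is a cone with apex `v`. -/
def IsConeWithApex (v : E2) (P : Set E2) : Prop :=
  ∀ x ∈ P, ∀ t : ℝ, 0 ≤ t → v + t • (x - v) ∈ P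

/-- A `v`-function with (at most) `p` pieces: a CPA function admitting an admissible
family of pieces all of which are cones with apex `v`. -/
def IsVFunction (v : E2) (p : ℕ) (f : E2 → ℝ) : Prop :=
  Continuous f ∧ ∃ Ps : Finset (Set E2), Ps.card ≤ p ∧ IsAdmissible f Ps ∧
    ∀ P ∈ Ps, IsConeWithApex v P

/-- A CPL function with (at most) `p` pieces: a `0`-function whose affine components
are linear. -/
def IsCPL (p : ℕ) (f : E2 → ℝ) : Prop :=
  Continuous f ∧ ∃ Ps : Finset (Set E2), Ps.card ≤ p ∧ IsAdmissible f Ps ∧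
    (∀ P ∈ Ps, IsConeWithApex 0 P) ∧
    ∀ P ∈ Ps, ∃ g : E2 → ℝ, IsLinearFn g ∧ EqOn f g P

/-- Componentwise ReLU. -/
def relu {n : ℕ} (x : Fin n → ℝ) : Fin n → ℝ := fun i => max 0 (x i)

/-- direction vector at angle θ -/
def ang (θ : ℝ) : E2 := ![Real.cos θ, Real.sin θ]

lemma ang_zero (θ : ℝ) : ang θ 0 = Real.cos θ := rfl
lemma ang_one (θ : ℝ) : ang θ 1 = Real.sin θ := rfl

lemma E2ext {x y : E2} (h0 : x 0 = y 0) (h1 : x 1 = y 1) : x = y := by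
  funext i; fin_cases i <;> assumption

lemma ang_add_two_pi (θ : ℝ) : ang (θ + 2 * Real.pi) = ang θ := by
  apply E2ext <;> simp [ang_zero, ang_one, Real.cos_add_two_pi, Real.sin_add_two_pi]

lemma ang_add_int_two_pi (θ : ℝ) (k : ℤ) : ang (θ + 2 * Real.pi * k) = ang θ := by
  apply E2ext <;> simp only [ang_zero, ang_one]
  · rw [show θ + 2*Real.pi*k = θ + k * (2*Real.pi) by ring, Real.cos_add_int_mul_two_pi]
  · rw [show θ + 2*Real.pi*k = θ + k * (2*Real.pi) by ring, Real.sin_add_int_mul_two_pi]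

/-- equal directions differ by 2πk -/
lemma ang_eq_iff {ψ θ : ℝ} (h : ang ψ = ang θ) : ∃ k : ℤ, ψ = θ + 2 * Real.pi * k := by
  have hc : Real.cos ψ = Real.cos θ := by have := congrFun h 0; simpa [ang_zero] using this
  have hs : Real.sin ψ = Real.sin θ := by have := congrFun h 1; simpa [ang_one] using this
  have : Complex.exp (ψ * Complex.I) = Complex.exp (θ * Complex.I) := by
    rw [Complex.exp_mul_I, Complex.exp_mul_I]
    rw [← Complex.ofReal_cos, ← Complex.ofReal_sin, ← Complex.ofReal_cos, ← Complex.ofReal_sin,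
      hc, hs]
  rw [Complex.exp_eq_exp_iff_exists_int] at this
  obtain ⟨n, hn⟩ := this
  refine ⟨n, ?_⟩
  have : (ψ : ℂ) = θ + 2 * Real.pi * n := by
    have hI : (ψ : ℂ) * Complex.I = (θ + 2 * Real.pi * n) * Complex.I := by
      rw [hn]; push_cast; ring_nf
    exact mul_right_cancel₀ Complex.I_ne_zero hI
  exact_mod_cast this

/-- polar decomposition of a nonzero vector -/
lemma polar (u : E2) (hu : u ≠ 0) : ∃ r θ : ℝ, 0 < r ∧ u = r • ang θ := by
  set z : ℂ := ⟨u 0, u 1⟩ with hz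
  have hz0 : z ≠ 0 := by
    intro h
    apply hu
    have h0 : u 0 = 0 := congrArg Complex.re h
    have h1 : u 1 = 0 := congrArg Complex.im h
    exact E2ext h0 h1
  have habs : 0 < ‖z‖ := by
    simpa [norm_pos_iff] using hz0
  refine ⟨‖z‖, Complex.arg z, habs, ?_⟩
  have hc := Complex.cos_arg hz0
  have hs := Complex.sin_arg z
  apply E2ext
  · simp only [Pi.smul_apply, ang_zero, smul_eq_mul, hc]
    field_simp
    rfl
  · simp only [Pi.smul_apply, ang_one, smul_eq_mul, hs]
    field_simp
    rfl

/-- affine homogeneity about v -/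
lemma affine_homog {g : E2 → ℝ} (hg : IsAffineFn g) (v u : E2) (t : ℝ) :
    g (v + t • u) = g v + t * (g (v + u) - g v) := by
  obtain ⟨a, b, hab⟩ := hg
  simp only [hab, dotProduct, Fin.sum_univ_two]
  simp only [Pi.add_apply, Pi.smul_apply, smul_eq_mul]
  ring
/-- Euclidean norm on E2 (explicit) -/
def nrm (u : E2) : ℝ := Real.sqrt (u 0 ^ 2 + u 1 ^ 2)

lemma nrm_ang (θ : ℝ) : nrm (ang θ) = 1 := by
  simp only [nrm, ang_zero, ang_one]
  rw [Real.cos_sq_add_sin_sq, Real.sqrt_one]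

lemma nrm_smul (r : ℝ) (hr : 0 ≤ r) (u : E2) : nrm (r • u) = r * nrm u := by
  simp only [nrm, Pi.smul_apply, smul_eq_mul]
  rw [show (r * u 0)^2 + (r * u 1)^2 = r^2 * (u 0 ^2 + u 1 ^2) by ring]
  rw [Real.sqrt_mul (by positivity), Real.sqrt_sq hr]

lemma nrm_pos {u : E2} (hu : u ≠ 0) : 0 < nrm u := by
  apply Real.sqrt_pos.mpr
  rcases eq_or_ne (u 0) 0 with h0 | h0
  · have h1 : u 1 ≠ 0 := fun h1 => hu (E2ext h0 h1)
    positivity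
  · positivity

/-- The chart: given base angle ψ and point y near the ray, produce the angle of y - v.
`chart v ψ y = ψ + arcsin( cross(ang ψ, y - v) / nrm (y-v) )`. -/
def chart (v : E2) (ψ : ℝ) (y : E2) : ℝ :=
  ψ + Real.arcsin ((Real.cos ψ * (y 1 - v 1) - Real.sin ψ * (y 0 - v 0)) / nrm (y - v))

/-- the dot product with the base direction -/
def dotb (v : E2) (ψ : ℝ) (y : E2) : ℝ :=
  Real.cos ψ * (y 0 - v 0) + Real.sin ψ * (y 1 - v 1)

lemma sub_apply' (y v : E2) (i : Fin 2) : (y - v) i = y i - v i := rfl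

/-- chart correctness: if dotb > 0 then y = v + nrm(y-v) • ang (chart v ψ y). -/
lemma chart_spec (v : E2) (ψ : ℝ) (y : E2) (hd : 0 < dotb v ψ y) :
    0 < nrm (y - v) ∧ y = v + nrm (y - v) • ang (chart v ψ y) := by
  have hyv : y - v ≠ 0 := by
    intro h
    have h0 : y 0 - v 0 = 0 := by have := congrFun h 0; simpa [sub_apply'] using this
    have h1 : y 1 - v 1 = 0 := by have := congrFun h 1; simpa [sub_apply'] using this
    simp only [dotb, h0, h1, mul_zero, add_zero] at hd; linarith
  have hn : 0 < nrm (y - v) := nrm_pos hyv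
  refine ⟨hn, ?_⟩
  set X := y 0 - v 0 with hX
  set Y := y 1 - v 1 with hY
  set n := nrm (y - v) with hnn
  set s := (Real.cos ψ * Y - Real.sin ψ * X) / n with hs
  have hnsq : n ^ 2 = X ^ 2 + Y ^ 2 := by
    rw [hnn, nrm]
    rw [Real.sq_sqrt (by positivity)]
    simp [sub_apply', hX, hY]
  have hpyth : (dotb v ψ y) ^ 2 + (Real.cos ψ * Y - Real.sin ψ * X) ^ 2 = n ^ 2 := by
    rw [hnsq]
    simp only [dotb, ← hX, ← hY]
    linear_combination (X^2 + Y^2) * (Real.sin_sq_add_cos_sq ψ)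
  have hs1 : s ^ 2 ≤ 1 := by
    rw [hs, div_pow]
    rw [div_le_one (by positivity)]
    nlinarith [sq_nonneg (dotb v ψ y)]
  have hsabs : -1 ≤ s ∧ s ≤ 1 := abs_le.mp (abs_le_one_iff_mul_self_le_one.mpr (by nlinarith))
  have hcos : Real.cos (Real.arcsin s) = dotb v ψ y / n := by
    rw [Real.cos_arcsin]
    have : 1 - s ^ 2 = (dotb v ψ y / n) ^ 2 := by
      rw [hs, div_pow, div_pow]
      field_simp
      nlinarith [hpyth]
    rw [this, Real.sqrt_sq (by positivity)]
  have hsin : Real.sin (Real.arcsin s) = s := Real.sin_arcsin hsabs.1 hsabs.2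
  have hne : n ≠ 0 := ne_of_gt hn
  have key0 : Real.cos ψ * dotb v ψ y - Real.sin ψ * (Real.cos ψ * Y - Real.sin ψ * X) = X := by
    simp only [dotb, ← hX, ← hY]
    linear_combination X * (Real.sin_sq_add_cos_sq ψ)
  have key1 : Real.sin ψ * dotb v ψ y + Real.cos ψ * (Real.cos ψ * Y - Real.sin ψ * X) = Y := by
    simp only [dotb, ← hX, ← hY]
    linear_combination Y * (Real.sin_sq_add_cos_sq ψ)
  apply E2ext
  · simp only [Pi.add_apply, Pi.smul_apply, smul_eq_mul, ang_zero, chart, Real.cos_add, hcos, hsin]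
    rw [← hX, ← hY, ← hnn, ← hs, hcos, hsin, hs]
    have : v 0 + n * (Real.cos ψ * (dotb v ψ y / n) - Real.sin ψ * ((Real.cos ψ * Y - Real.sin ψ * X) / n))
        = v 0 + (Real.cos ψ * dotb v ψ y - Real.sin ψ * (Real.cos ψ * Y - Real.sin ψ * X)) := by
      field_simp
    rw [this, key0, hX]; ring
  · simp only [Pi.add_apply, Pi.smul_apply, smul_eq_mul, ang_one, chart, Real.sin_add, hcos, hsin]
    rw [← hX, ← hY, ← hnn, ← hs, hcos, hsin, hs]
    have : v 1 + n * (Real.sin ψ * (dotb v ψ y / n) + Real.cos ψ * ((Real.cos ψ * Y - Real.sin ψ * X) / n))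
        = v 1 + (Real.sin ψ * dotb v ψ y + Real.cos ψ * (Real.cos ψ * Y - Real.sin ψ * X)) := by
      field_simp
    rw [this, key1, hY]; ring
lemma nrm_zero' : nrm (0 : E2) = 0 := by simp [nrm]

lemma continuous_nrm_sub (v : E2) : Continuous (fun y : E2 => nrm (y - v)) := by
  have h0 : Continuous (fun y : E2 => (y - v) 0) :=
    (continuous_apply 0).comp (continuous_id.sub continuous_const)
  have h1 : Continuous (fun y : E2 => (y - v) 1) :=
    (continuous_apply 1).comp (continuous_id.sub continuous_const)
  exact Real.continuous_sqrt.comp ((h0.pow 2).add (h1.pow 2))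

lemma continuous_dotb (v : E2) (ψ : ℝ) : Continuous (dotb v ψ) := by
  unfold dotb; fun_prop

lemma continuousAt_chart (v : E2) (ψ : ℝ) {x : E2} (hx : x ≠ v) :
    ContinuousAt (chart v ψ) x := by
  unfold chart
  apply ContinuousAt.add continuousAt_const
  apply Real.continuous_arcsin.continuousAt.comp
  apply ContinuousAt.div
  · fun_prop
  · exact (continuous_nrm_sub v).continuousAt
  · exact ne_of_gt (nrm_pos (sub_ne_zero_of_ne hx))

lemma chart_nbhd (v : E2) (ψ δ : ℝ) (hδ : 0 < δ) (x : E2) (r : ℝ) (hr : 0 < r)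
    (hx : x = v + r • ang ψ) :
    ∃ ρ > 0, ∀ y ∈ Metric.ball x ρ,
      ∃ r' ψ' : ℝ, 0 < r' ∧ y = v + r' • ang ψ' ∧ |ψ' - ψ| < δ := by
  have hxv : x - v = r • ang ψ := by rw [hx]; abel
  have hnx : nrm (x - v) = r := by rw [hxv, nrm_smul r hr.le, nrm_ang, mul_one]
  have hxvne : x ≠ v := by
    intro h
    rw [h, sub_self, nrm_zero'] at hnx
    linarith
  have h0 : x 0 - v 0 = r * Real.cos ψ := by
    have := congrFun hxv 0; simpa [sub_apply', ang_zero] using this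
  have h1 : x 1 - v 1 = r * Real.sin ψ := by
    have := congrFun hxv 1; simpa [sub_apply', ang_one] using this
  have hdot : dotb v ψ x = r := by
    simp only [dotb, h0, h1]
    linear_combination r * (Real.sin_sq_add_cos_sq ψ)
  have hchx : chart v ψ x = ψ := by
    simp only [chart, h0, h1,
      show Real.cos ψ * (r * Real.sin ψ) - Real.sin ψ * (r * Real.cos ψ) = 0 by ring]
    simp
  have hev1 : {y : E2 | 0 < dotb v ψ y} ∈ nhds x :=
    (isOpen_lt continuous_const (continuous_dotb v ψ)).mem_nhds (by simp [hdot, hr])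
  have htend : Filter.Tendsto (chart v ψ) (nhds x) (nhds ψ) := by
    have hc := continuousAt_chart v ψ hxvne
    rwa [ContinuousAt, hchx] at hc
  have hev2 : chart v ψ ⁻¹' (Metric.ball ψ δ) ∈ nhds x := htend (Metric.ball_mem_nhds ψ hδ)
  obtain ⟨ρ, hρ, hball⟩ := Metric.mem_nhds_iff.mp (Filter.inter_mem hev1 hev2)
  refine ⟨ρ, hρ, fun y hy => ?_⟩
  obtain ⟨hd, hcl⟩ := hball hy
  obtain ⟨hn, hspec⟩ := chart_spec v ψ y hd
  refine ⟨nrm (y - v), chart v ψ y, hn, hspec, ?_⟩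
  simpa [Metric.mem_ball, Real.dist_eq] using hcl
/-- angles whose ray direction lies in P resp. interior P -/
def dirA (v : E2) (P : Set E2) : Set ℝ := {θ | v + ang θ ∈ P}
def dirD (v : E2) (P : Set E2) : Set ℝ := {θ | v + ang θ ∈ interior P}

lemma continuous_vang (v : E2) : Continuous (fun θ : ℝ => v + ang θ) := by
  apply continuous_pi
  intro i
  fin_cases i
  · simpa [ang] using (by fun_prop : Continuous fun a => v 0 + Real.cos a)
  · simpa [ang] using (by fun_prop : Continuous fun a => v 1 + Real.sin a)

lemma dirA_closed (v : E2) (P : Set E2) (hP : IsClosed P) : IsClosed (dirA v P) :=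
  hP.preimage (continuous_vang v)

lemma dirD_open (v : E2) (P : Set E2) : IsOpen (dirD v P) :=
  isOpen_interior.preimage (continuous_vang v)

lemma dirA_per (v : E2) (P : Set E2) (θ : ℝ) (k : ℤ) :
    θ + 2 * Real.pi * k ∈ dirA v P ↔ θ ∈ dirA v P := by
  simp only [dirA, Set.mem_setOf_eq, ang_add_int_two_pi]

lemma dirD_per (v : E2) (P : Set E2) (θ : ℝ) (k : ℤ) :
    θ + 2 * Real.pi * k ∈ dirD v P ↔ θ ∈ dirD v P := by
  simp only [dirD, Set.mem_setOf_eq, ang_add_int_two_pi]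

lemma cone_scale (v : E2) {P : Set E2} (hcone : IsConeWithApex v P) {x : E2}
    (hx : x ∈ interior P) {t : ℝ} (ht : 0 < t) : v + t • (x - v) ∈ interior P := by
  obtain ⟨ε, hε, hball⟩ := Metric.mem_nhds_iff.mp (mem_interior_iff_mem_nhds.mp hx)
  apply mem_interior_iff_mem_nhds.mpr
  apply Filter.mem_of_superset (Metric.ball_mem_nhds _ (show (0:ℝ) < t * ε by positivity))
  intro w hw
  set z := v + t⁻¹ • (w - v) with hz
  have hwz : w = v + t • (z - v) := by
    rw [hz]
    have : t • (v + t⁻¹ • (w - v) - v) = w - v := by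
      rw [add_sub_cancel_left, smul_smul, mul_inv_cancel₀ (ne_of_gt ht), one_smul]
    rw [this]; abel
  have hdist : w - (v + t • (x - v)) = t • (z - x) := by
    rw [hwz]; module
  have hzx : dist z x < ε := by
    have h1 : dist w (v + t • (x - v)) = t * dist z x := by
      rw [dist_eq_norm, hdist, norm_smul, Real.norm_eq_abs, abs_of_pos ht, dist_eq_norm]
    have h2 := Metric.mem_ball.mp hw
    rw [h1] at h2
    nlinarith [dist_nonneg (x := z) (y := x)]
  have hzP : z ∈ P := hball (Metric.mem_ball.mpr hzx)
  rw [hwz]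
  exact hcone z hzP t ht.le

lemma dirD_subset_dirA (v : E2) (P : Set E2) : dirD v P ⊆ dirA v P := by
  intro θ h
  have h' : v + ang θ ∈ interior P := h
  exact Set.mem_setOf_eq ▸ (interior_subset h' : v + ang θ ∈ P)
lemma dirD_of_polar (v : E2) {P : Set E2} (hcone : IsConeWithApex v P) {y : E2}
    (hy : y ∈ interior P) {r ψ : ℝ} (hr : 0 < r) (hpol : y = v + r • ang ψ) :
    ψ ∈ dirD v P := by
  have : v + r⁻¹ • (y - v) ∈ interior P := cone_scale v hcone hy (by positivity)
  have hyv : y - v = r • ang ψ := by rw [hpol]; abel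
  rw [hyv, smul_smul, inv_mul_cancel₀ (ne_of_gt hr), one_smul] at this
  exact this

lemma dirA_subset_closure_dirD (v : E2) {P : Set E2} (hcone : IsConeWithApex v P)
    (hreg : P = closure (interior P)) :
    dirA v P ⊆ closure (dirD v P) := by
  intro θ hθ
  rw [Metric.mem_closure_iff]
  intro ε hε
  set δ := min ε 1 with hδdef
  have hδ : 0 < δ := lt_min hε one_pos
  obtain ⟨ρ, hρ, hball⟩ := chart_nbhd v θ δ hδ (v + ang θ) 1 one_pos (by rw [one_smul])
  have hxcl : v + ang θ ∈ closure (interior P) := by rw [← hreg]; exact hθ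
  obtain ⟨y, hyint, hydist⟩ := Metric.mem_closure_iff.mp hxcl ρ hρ
  obtain ⟨r', ψ', hr', hpol, hang⟩ := hball y (by rwa [Metric.mem_ball, dist_comm])
  refine ⟨ψ', dirD_of_polar v hcone hyint hr' hpol, ?_⟩
  rw [Real.dist_eq]
  calc |θ - ψ'| = |ψ' - θ| := abs_sub_comm _ _
  _ < δ := hang
  _ ≤ ε := min_le_left _ _

lemma mem_uIcc_shift {z a b s : ℝ} : z ∈ Set.uIcc (a + s) (b + s) ↔ z - s ∈ Set.uIcc a b := by
  rw [Set.mem_uIcc, Set.mem_uIcc]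
  constructor <;> intro h <;> rcases h with h | h
  · left; constructor <;> linarith [h.1, h.2]
  · right; constructor <;> linarith [h.1, h.2]
  · left; constructor <;> linarith [h.1, h.2]
  · right; constructor <;> linarith [h.1, h.2]

lemma mem_uIcc_of_abs {z a b : ℝ} (h : |b - a| < d) (hz : z ∈ Set.uIcc a b) : |z - a| < d := by
  rw [Set.mem_uIcc] at hz
  rw [abs_sub_lt_iff] at h ⊢
  rcases hz with h1 | h1 <;> constructor <;> linarith [h1.1, h1.2]

/-- key connectivity transfer: directions of a connected conical open set form a
"circle-connected" set of angles. -/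
lemma dir_conn (v : E2) {P : Set E2} (hcone : IsConeWithApex v P)
    (hco : IsPreconnected (interior P)) (hv : v ∉ interior P) :
    ∀ θ θ', θ ∈ dirD v P → θ' ∈ dirD v P →
      ∃ k : ℤ, Set.uIcc θ (θ' + 2 * Real.pi * k) ⊆ dirD v P := by
  intro θ θ' hθ hθ'
  set D := dirD v P with hD
  set Good : ℝ → Prop := fun ψ => ∃ k : ℤ, Set.uIcc θ (ψ + 2 * Real.pi * k) ⊆ D with hGood
  have good_shift : ∀ ψ (m : ℤ), Good ψ → Good (ψ + 2 * Real.pi * m) := by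
    rintro ψ m ⟨k, hk⟩
    refine ⟨k - m, ?_⟩
    have : ψ + 2 * Real.pi * ((k : ℝ) - (m : ℝ)) = ψ + 2 * Real.pi * m + 2 * Real.pi * ((k:ℤ) - (m:ℤ) : ℤ) - 2 * Real.pi * m := by push_cast; ring
    have h2 : ψ + 2 * Real.pi * m + 2 * Real.pi * ((k - m : ℤ) : ℝ) = ψ + 2 * Real.pi * k := by
      push_cast; ring
    rwa [h2]
  have good_ext : ∀ ψ ψ', Good ψ → Set.uIcc ψ ψ' ⊆ D → Good ψ' := by
    rintro ψ ψ'' ⟨k, hk⟩ hsub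
    refine ⟨k, fun z hz => ?_⟩
    have hcover := Set.uIcc_subset_uIcc_union_uIcc (a := θ) (b := ψ + 2 * Real.pi * k)
      (c := ψ'' + 2 * Real.pi * k) hz
    rcases hcover with h | h
    · exact hk h
    · have : z - 2 * Real.pi * k ∈ Set.uIcc ψ ψ'' := mem_uIcc_shift.mp h
      have hmem := hsub this
      have := (dirD_per v P (z - 2 * Real.pi * k) k).mpr hmem
      simpa using this
  set GoodPt : E2 → Prop := fun x => ∃ r ψ : ℝ, 0 < r ∧ x = v + r • ang ψ ∧ Good ψ with hGP
  have goodpt_angle : ∀ (ψ : ℝ) x, 0 < (1:ℝ) → x = v + (1:ℝ) • ang ψ → GoodPt x → Good ψ := by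
    rintro ψ x _ hx ⟨r'', ψ'', hr'', hx'', hg''⟩
    rw [hx] at hx''
    have heq : (1:ℝ) • ang ψ = r'' • ang ψ'' := by
      have := add_left_cancel hx''
      exact this
    have hnrm : (1:ℝ) = r'' := by
      have h1 := congrArg nrm heq
      rwa [nrm_smul _ zero_le_one, nrm_smul _ hr''.le, nrm_ang, nrm_ang, mul_one, mul_one] at h1
    rw [← hnrm, one_smul, one_smul] at heq
    obtain ⟨m, hm⟩ := ang_eq_iff heq.symm
    have := good_shift ψ'' ((-m : ℤ)) hg''
    rw [hm] at this
    have harg : ψ + 2 * Real.pi * m + 2 * Real.pi * (-m : ℤ) = ψ := by push_cast; ring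
    rwa [harg] at this
  -- the local equivalence
  have key : ∀ x ∈ interior P, ∃ ρ > 0, Metric.ball x ρ ⊆ interior P ∧
      ∀ y ∈ Metric.ball x ρ, (GoodPt y ↔ GoodPt x) := by
    intro x hx
    have hxv : x ≠ v := fun h => hv (h ▸ hx)
    obtain ⟨r, ψx, hr, hpol⟩ := polar (x - v) (sub_ne_zero_of_ne hxv)
    have hxeq : x = v + r • ang ψx := by rw [← hpol]; abel
    have hψx : ψx ∈ D := dirD_of_polar v hcone hx hr hxeq
    obtain ⟨δ, hδ, hδsub⟩ := Metric.mem_nhds_iff.mp ((dirD_open v P).mem_nhds hψx)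
    obtain ⟨ρ₁, hρ₁, hch⟩ := chart_nbhd v ψx δ hδ x r hr hxeq
    obtain ⟨ρ₂, hρ₂, hρ₂sub⟩ := Metric.mem_nhds_iff.mp (isOpen_interior.mem_nhds hx)
    refine ⟨min ρ₁ ρ₂, lt_min hρ₁ hρ₂, fun y hy =>
      hρ₂sub (Metric.mem_ball.mpr (lt_of_lt_of_le (Metric.mem_ball.mp hy) (min_le_right _ _))), ?_⟩
    intro y hy
    obtain ⟨r', ψ', hr', hpol', hang'⟩ :=
      hch y (Metric.mem_ball.mpr (lt_of_lt_of_le (Metric.mem_ball.mp hy) (min_le_left _ _)))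
    have hIcc : Set.uIcc ψx ψ' ⊆ D := by
      intro z hz
      apply hδsub
      rw [Metric.mem_ball, Real.dist_eq]
      have : |z - ψx| < δ := mem_uIcc_of_abs hang' hz
      exact this
    have hgequiv : Good ψ' ↔ Good ψx :=
      ⟨fun h => good_ext ψ' ψx h (Set.uIcc_comm ψx ψ' ▸ hIcc), fun h => good_ext ψx ψ' h hIcc⟩
    constructor
    · rintro ⟨r'', ψ'', hr'', hy'', hg''⟩
      -- y has two polar reps: relate ψ'' to ψ'
      have heq : r'' • ang ψ'' = r' • ang ψ' := add_left_cancel (hy''.symm.trans hpol')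
      have hnrm : r'' = r' := by
        have h1 := congrArg nrm heq
        rwa [nrm_smul _ hr''.le, nrm_smul _ hr'.le, nrm_ang, nrm_ang, mul_one, mul_one] at h1
      rw [hnrm] at heq
      have hang : ang ψ'' = ang ψ' := smul_right_injective E2 (ne_of_gt hr') heq
      obtain ⟨m, hm⟩ := ang_eq_iff hang
      have hgψ' : Good ψ' := by
        have := good_shift ψ'' (-m) hg''
        rw [hm] at this
        have harg : ψ' + 2 * Real.pi * m + 2 * Real.pi * (-m : ℤ) = ψ' := by push_cast; ring
        rwa [harg] at this
      exact ⟨r, ψx, hr, hxeq, hgequiv.mp hgψ'⟩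
    · rintro ⟨r'', ψ'', hr'', hx'', hg''⟩
      -- x polar reps: ψ'' vs ψx
      have heq : r'' • ang ψ'' = r • ang ψx := add_left_cancel (hx''.symm.trans hxeq)
      have hnrm : r'' = r := by
        have h1 := congrArg nrm heq
        rwa [nrm_smul _ hr''.le, nrm_smul _ hr.le, nrm_ang, nrm_ang, mul_one, mul_one] at h1
      rw [hnrm] at heq
      have hang : ang ψ'' = ang ψx := smul_right_injective E2 (ne_of_gt hr) heq
      obtain ⟨m, hm⟩ := ang_eq_iff hang
      have hgψx : Good ψx := by
        have := good_shift ψ'' (-m) hg''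
        rw [hm] at this
        have harg : ψx + 2 * Real.pi * m + 2 * Real.pi * (-m : ℤ) = ψx := by push_cast; ring
        rwa [harg] at this
      exact ⟨r', ψ', hr', hpol', hgequiv.mpr hgψx⟩
  choose! ρ hρpos hρsub hρiff using key
  set u : Set E2 := ⋃ (x : E2) (_ : x ∈ interior P) (_ : GoodPt x), Metric.ball x (ρ x) with hu
  set w : Set E2 := ⋃ (x : E2) (_ : x ∈ interior P) (_ : ¬ GoodPt x), Metric.ball x (ρ x) with hw
  have huo : IsOpen u := isOpen_iUnion fun x => isOpen_iUnion fun hx => isOpen_iUnion fun _ => Metric.isOpen_ball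
  have hwo : IsOpen w := isOpen_iUnion fun x => isOpen_iUnion fun hx => isOpen_iUnion fun _ => Metric.isOpen_ball
  have hcover : interior P ⊆ u ∪ w := by
    intro x hx
    by_cases hg : GoodPt x
    · left; exact Set.mem_biUnion hx (Set.mem_iUnion.mpr ⟨hg, Metric.mem_ball_self (hρpos x hx)⟩)
    · right; exact Set.mem_biUnion hx (Set.mem_iUnion.mpr ⟨hg, Metric.mem_ball_self (hρpos x hx)⟩)
  -- conclude
  have hx' : v + ang θ' ∈ interior P := hθ'
  by_contra hcon
  have hnotgood : ¬ GoodPt (v + ang θ') := by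
    intro hgp
    have hgood : Good θ' := goodpt_angle θ' (v + ang θ') one_pos (by rw [one_smul]) hgp
    exact hcon hgood
  have hne1 : (interior P ∩ u).Nonempty := by
    refine ⟨v + ang θ, hθ, ?_⟩
    have hgp : GoodPt (v + ang θ) := ⟨1, θ, one_pos, by rw [one_smul], ⟨0, by
      simp only [Int.cast_zero, mul_zero, add_zero, Set.uIcc_self, Set.singleton_subset_iff]
      exact hθ⟩⟩
    exact Set.mem_biUnion hθ (Set.mem_iUnion.mpr ⟨hgp, Metric.mem_ball_self (hρpos _ hθ)⟩)
  have hne2 : (interior P ∩ w).Nonempty := by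
    refine ⟨v + ang θ', hx', ?_⟩
    exact Set.mem_biUnion hx' (Set.mem_iUnion.mpr ⟨hnotgood, Metric.mem_ball_self (hρpos _ hx')⟩)
  obtain ⟨z, hzP, hzu, hzw⟩ := hco u w huo hwo hcover hne1 hne2
  obtain ⟨x₁, hx₁⟩ := Set.mem_iUnion.mp hzu
  obtain ⟨hx₁P, hrest₁⟩ := Set.mem_iUnion.mp hx₁
  obtain ⟨hgp₁, hball₁⟩ := Set.mem_iUnion.mp hrest₁
  obtain ⟨x₂, hx₂⟩ := Set.mem_iUnion.mp hzw
  obtain ⟨hx₂P, hrest₂⟩ := Set.mem_iUnion.mp hx₂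
  obtain ⟨hgp₂, hball₂⟩ := Set.mem_iUnion.mp hrest₂
  have h1 : GoodPt z := (hρiff x₁ hx₁P z hball₁).mpr hgp₁
  have h2 : ¬ GoodPt z := fun h => hgp₂ ((hρiff x₂ hx₂P z hball₂).mp h)
  exact h2 h1
local notation "π" => Real.pi

lemma two_pi_pos : (0:ℝ) < 2 * π := by positivity

lemma shift_into (x a : ℝ) : ∃ k : ℤ, a ≤ x + 2*π*k ∧ x + 2*π*k < a + 2*π := by
  refine ⟨⌈(a - x)/(2*π)⌉, ?_, ?_⟩
  · have h := Int.le_ceil ((a - x)/(2*π))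
    have h2 := mul_le_mul_of_nonneg_right h two_pi_pos.le
    rw [div_mul_cancel₀ _ (ne_of_gt two_pi_pos)] at h2
    linarith
  · have h : ((⌈(a - x)/(2*π)⌉ : ℝ)) < (a - x)/(2*π) + 1 := Int.ceil_lt_add_one _
    have h2 := mul_lt_mul_of_pos_right h two_pi_pos
    rw [add_mul, div_mul_cancel₀ _ (ne_of_gt two_pi_pos), one_mul] at h2
    linarith

lemma int_2pi_cases (k : ℤ) : 2*π*k ≤ -(2*π) ∨ (k = 0) ∨ 2*π ≤ 2*π*k := by
  rcases lt_trichotomy k 0 with h | h | h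
  · left
    have : (k:ℝ) ≤ -1 := by exact_mod_cast (by omega : k ≤ -1)
    nlinarith [Real.pi_pos]
  · right; left; exact h
  · right; right
    have : (1:ℝ) ≤ k := by exact_mod_cast h
    nlinarith [Real.pi_pos]

/-- one connected component of a periodic circle-connected open set -/
lemma arc_one (D E : Set ℝ) (hDo : IsOpen D) (hEo : IsOpen E)
    (hDper : ∀ (θ:ℝ) (k:ℤ), θ + 2*π*k ∈ D ↔ θ ∈ D)
    (hEper : ∀ (θ:ℝ) (k:ℤ), θ + 2*π*k ∈ E ↔ θ ∈ E)
    (hdisj : D ∩ E = ∅)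
    (hconn : ∀ θ θ', θ ∈ D → θ' ∈ D → ∃ k : ℤ, Set.uIcc θ (θ' + 2*π*k) ⊆ D)
    {θ₀ : ℝ} (hθ₀ : θ₀ ∈ D) {ϑ : ℝ} (hϑ : ϑ ∈ E) :
    ∃ p q, p < θ₀ ∧ θ₀ < q ∧ q - p < 2*π ∧ Set.Ioo p q ⊆ D ∧ p ∉ D ∧ q ∉ D ∧
      (∀ ψ ∈ D, ∃ k : ℤ, ψ + 2*π*k ∈ Set.Ioo p q) := by
  obtain ⟨k₀, hk₀1, hk₀2⟩ := shift_into ϑ θ₀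
  set ξ := ϑ + 2*π*k₀ with hξdef
  have hξE : ξ ∈ E := (hEper ϑ k₀).mpr hϑ
  have hmemD : ∀ x, x ∈ D → x ∈ E → False := by
    intro x h1 h2
    have : x ∈ D ∩ E := ⟨h1, h2⟩
    rw [hdisj] at this; exact this
  have hξD : ξ ∉ D := fun h => hmemD ξ h hξE
  have hξgt : θ₀ < ξ := lt_of_le_of_ne hk₀1 (fun h => hξD (h ▸ hθ₀))
  have hξ'D : ξ - 2*π ∉ D := by
    intro h
    apply hξD
    have : (ξ - 2*π) + 2*π*((1:ℤ):ℝ) = ξ := by push_cast; ring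
    exact this ▸ (hDper (ξ - 2*π) 1).mpr h
  have hξ'lt : ξ - 2*π < θ₀ := by linarith
  -- an open interval around θ₀ inside D
  obtain ⟨ε, hε, hball⟩ := Metric.mem_nhds_iff.mp (hDo.mem_nhds hθ₀)
  rw [Real.ball_eq_Ioo] at hball
  -- right endpoint
  set S : Set ℝ := {s | Set.Ico θ₀ s ⊆ D} with hS
  have hSne : S.Nonempty := ⟨θ₀, by simp [hS, Set.Ico_self]⟩
  have hubd : ∀ s ∈ S, s ≤ ξ := by
    intro s hs
    by_contra hcon
    push_neg at hcon
    exact hξD (hs ⟨hξgt.le, hcon⟩)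
  have hSbdd : BddAbove S := ⟨ξ, hubd⟩
  set q := sSup S with hq
  have hIcoq : Set.Ico θ₀ q ⊆ D := by
    intro x hx
    obtain ⟨s, hsS, hxs⟩ := exists_lt_of_lt_csSup hSne hx.2
    exact hsS ⟨hx.1, hxs⟩
  have hqθ₀ : θ₀ + ε ≤ q := le_csSup hSbdd (by
    intro x hx
    exact hball ⟨by linarith [hx.1], hx.2⟩)
  have hθ₀q : θ₀ < q := by linarith
  have hqle : q ≤ ξ := csSup_le hSne hubd
  have hqD : q ∉ D := by
    intro hqmem
    obtain ⟨ε', hε', hball'⟩ := Metric.mem_nhds_iff.mp (hDo.mem_nhds hqmem)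
    rw [Real.ball_eq_Ioo] at hball'
    have : q + ε'/2 ∈ S := by
      intro x hx
      rcases lt_or_ge x q with h | h
      · exact hIcoq ⟨hx.1, h⟩
      · exact hball' ⟨by linarith, by linarith [hx.2]⟩
    have := le_csSup hSbdd this
    linarith
  -- left endpoint
  set T : Set ℝ := {s | Set.Ioc s θ₀ ⊆ D} with hT
  have hTne : T.Nonempty := ⟨θ₀, by simp [hT, Set.Ioc_self]⟩
  have hlbd : ∀ s ∈ T, ξ - 2*π ≤ s := by
    intro s hs
    by_contra hcon
    push_neg at hcon
    exact hξ'D (hs ⟨hcon, hξ'lt.le⟩)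
  have hTbdd : BddBelow T := ⟨ξ - 2*π, hlbd⟩
  set p := sInf T with hp
  have hIocp : Set.Ioc p θ₀ ⊆ D := by
    intro x hx
    obtain ⟨s, hsT, hxs⟩ := exists_lt_of_csInf_lt hTne hx.1
    exact hsT ⟨hxs, hx.2⟩
  have hpθ₀' : p ≤ θ₀ - ε := csInf_le hTbdd (by
    intro x hx
    exact hball ⟨by linarith [hx.1], by linarith [hx.2]⟩)
  have hpθ₀ : p < θ₀ := by linarith
  have hple : ξ - 2*π ≤ p := le_csInf hTne hlbd
  have hpD : p ∉ D := by
    intro hpmem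
    obtain ⟨ε', hε', hball'⟩ := Metric.mem_nhds_iff.mp (hDo.mem_nhds hpmem)
    rw [Real.ball_eq_Ioo] at hball'
    have : p - ε'/2 ∈ T := by
      intro x hx
      rcases lt_or_ge p x with h | h
      · exact hIocp ⟨h, hx.2⟩
      · exact hball' ⟨by linarith [hx.1], by linarith⟩
    have := csInf_le hTbdd this
    linarith
  have hIoo : Set.Ioo p q ⊆ D := by
    intro x hx
    rcases le_or_gt x θ₀ with h | h
    · exact hIocp ⟨hx.1, h⟩
    · exact hIcoq ⟨h.le, hx.2⟩
  have hlen : q - p < 2*π := by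
    rcases lt_or_ge (q - p) (2*π) with h | h
    · exact h
    · exfalso
      have hqξ : q = ξ := le_antisymm hqle (by linarith)
      have hpξ : p = ξ - 2*π := le_antisymm (by linarith) hple
      obtain ⟨ε', hε', hballE⟩ := Metric.mem_nhds_iff.mp (hEo.mem_nhds hξE)
      rw [Real.ball_eq_Ioo] at hballE
      set ζ := ξ - min ε' π / 2 with hζ
      have hmin1 : min ε' π ≤ ε' := min_le_left _ _
      have hmin2 : min ε' π ≤ π := min_le_right _ _
      have hminpos : 0 < min ε' π := lt_min hε' Real.pi_pos
      have hζE : ζ ∈ E := hballE ⟨by rw [hζ]; linarith, by rw [hζ]; linarith⟩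
      have hζD : ζ ∈ D := hIoo
        ⟨by rw [hpξ, hζ]; linarith [Real.pi_pos], by rw [hqξ, hζ]; linarith⟩
      exact hmemD ζ hζD hζE
  refine ⟨p, q, hpθ₀, hθ₀q, hlen, hIoo, hpD, hqD, ?_⟩
  intro ψ hψ
  obtain ⟨k, hk⟩ := hconn θ₀ ψ hθ₀ hψ
  set y := ψ + 2*π*k with hy
  refine ⟨k, ?_, ?_⟩
  · rcases lt_or_ge p y with h | h
    · exact h
    · exact absurd (hk (by
        rw [Set.mem_uIcc]; right; exact ⟨h, hpθ₀.le⟩)) hpD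
  · rcases lt_or_ge y q with h | h
    · exact h
    · exact absurd (hk (Set.mem_uIcc.mpr (Or.inl ⟨hθ₀q.le, h⟩))) hqD

lemma lattice_cover {D : Set ℝ} {p q : ℝ}
    (hchar : ∀ ψ ∈ D, ∃ k : ℤ, ψ + 2*π*k ∈ Set.Ioo p q) :
    closure D ⊆ {x | ∃ k : ℤ, x + 2*π*k ∈ Set.Icc p q} := by
  intro x hx
  obtain ⟨k₀, h1, h2⟩ := shift_into x p
  by_cases hle : x + 2*π*k₀ ≤ q
  · exact ⟨k₀, h1, hle⟩
  · exfalso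
    push_neg at hle
    have hxU : x ∈ Set.Ioo (q - 2*π*k₀) (p + 2*π - 2*π*k₀) := ⟨by linarith, by linarith⟩
    obtain ⟨y, hyU, hyD⟩ := mem_closure_iff.mp hx _ isOpen_Ioo hxU
    obtain ⟨m, hm⟩ := hchar y hyD
    have hy1 : q < y + 2*π*k₀ := by have := hyU.1; linarith
    have hy2 : y + 2*π*k₀ < p + 2*π := by have := hyU.2; linarith
    have hdec : y + 2*π*m = y + 2*π*k₀ + 2*π*((m - k₀ : ℤ):ℝ) := by push_cast; ring
    rcases int_2pi_cases (m - k₀) with h | h | h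
    · have := hm.1; rw [hdec] at this; linarith
    · have hmk : m = k₀ := by omega
      rw [hmk] at hm
      have := hm.2; linarith
    · have := hm.2; rw [hdec] at this; linarith

/-- the three-arcs decomposition, ordered case -/
lemma arc_ordered {A0 X Y : Set ℝ} {p q p1 q1 p2 q2 : ℝ}
    (h1 : p < q) (h2 : q ≤ p1) (h3 : p1 < q1) (h4 : q1 ≤ p2) (h5 : p2 < q2)
    (h6 : q2 ≤ p + 2*π)
    (lat0 : A0 ⊆ {x | ∃ k : ℤ, x + 2*π*k ∈ Set.Icc p q})
    (latX : X ⊆ {x | ∃ k : ℤ, x + 2*π*k ∈ Set.Icc p1 q1})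
    (latY : Y ⊆ {x | ∃ k : ℤ, x + 2*π*k ∈ Set.Icc p2 q2})
    (hcover : ∀ x : ℝ, x ∈ A0 ∨ x ∈ X ∨ x ∈ Y) :
    q = p1 ∧ q1 = p2 ∧ q2 = p + 2*π := by
  have key : ∀ τ, q < τ → τ < p + 2*π → (τ < p1 ∨ q1 < τ) → (τ < p2 ∨ q2 < τ) → False := by
    intro τ hτ1 hτ2 hX hY
    rcases hcover τ with hA | hA | hA
    · obtain ⟨k, hk1, hk2⟩ := lat0 hA
      rcases int_2pi_cases k with h | ⟨rfl⟩ | h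
      · push_cast at hk1 hk2; linarith
      · push_cast at hk1 hk2; linarith
      · push_cast at hk1 hk2; linarith
    · obtain ⟨k, hk1, hk2⟩ := latX hA
      rcases int_2pi_cases k with h | ⟨rfl⟩ | h
      · push_cast at hk1 hk2; linarith
      · push_cast at hk1 hk2
        rcases hX with hp | hp <;> linarith
      · push_cast at hk1 hk2; linarith
    · obtain ⟨k, hk1, hk2⟩ := latY hA
      rcases int_2pi_cases k with h | ⟨rfl⟩ | h
      · push_cast at hk1 hk2; linarith
      · push_cast at hk1 hk2
        rcases hY with hp | hp <;> linarith
      · push_cast at hk1 hk2; linarith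
  have e1 : q = p1 := by
    by_contra hne
    have hlt : q < p1 := lt_of_le_of_ne h2 hne
    exact key ((q + p1)/2) (by linarith) (by linarith)
      (Or.inl (by linarith)) (Or.inl (by linarith))
  have e2 : q1 = p2 := by
    by_contra hne
    have hlt : q1 < p2 := lt_of_le_of_ne h4 hne
    exact key ((q1 + p2)/2) (by linarith) (by linarith)
      (Or.inr (by linarith)) (Or.inl (by linarith))
  have e3 : q2 = p + 2*π := by
    by_contra hne
    have hlt : q2 < p + 2*π := lt_of_le_of_ne h6 hne
    exact key ((q2 + (p + 2*π))/2) (by linarith) (by linarith)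
      (Or.inr (by linarith)) (Or.inr (by linarith))
  exact ⟨e1, e2, e3⟩
/-- three arcs: the main circle decomposition -/
lemma arc_structure (A0 A1 A2 D0 D1 D2 : Set ℝ)
    (hA0 : IsClosed A0) (hA1 : IsClosed A1) (hA2 : IsClosed A2)
    (hD0 : IsOpen D0) (hD1 : IsOpen D1) (hD2 : IsOpen D2)
    (hA0per : ∀ (θ:ℝ) (k:ℤ), θ + 2*π*k ∈ A0 ↔ θ ∈ A0)
    (hD0per : ∀ (θ:ℝ) (k:ℤ), θ + 2*π*k ∈ D0 ↔ θ ∈ D0)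
    (hD1per : ∀ (θ:ℝ) (k:ℤ), θ + 2*π*k ∈ D1 ↔ θ ∈ D1)
    (hD2per : ∀ (θ:ℝ) (k:ℤ), θ + 2*π*k ∈ D2 ↔ θ ∈ D2)
    (hsub0 : D0 ⊆ A0) (hsub1 : D1 ⊆ A1) (hsub2 : D2 ⊆ A2)
    (hd01 : A0 ∩ D1 = ∅) (hd02 : A0 ∩ D2 = ∅) (hd10 : A1 ∩ D0 = ∅)
    (hd12 : A1 ∩ D2 = ∅) (hd20 : A2 ∩ D0 = ∅) (hd21 : A2 ∩ D1 = ∅)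
    (hcl0 : A0 ⊆ closure D0) (hcl1 : A1 ⊆ closure D1) (hcl2 : A2 ⊆ closure D2)
    (hne0 : D0.Nonempty) (hne1 : D1.Nonempty) (hne2 : D2.Nonempty)
    (hconn0 : ∀ θ θ', θ ∈ D0 → θ' ∈ D0 → ∃ k : ℤ, Set.uIcc θ (θ' + 2*π*k) ⊆ D0)
    (hconn1 : ∀ θ θ', θ ∈ D1 → θ' ∈ D1 → ∃ k : ℤ, Set.uIcc θ (θ' + 2*π*k) ⊆ D1)
    (hconn2 : ∀ θ θ', θ ∈ D2 → θ' ∈ D2 → ∃ k : ℤ, Set.uIcc θ (θ' + 2*π*k) ⊆ D2)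
    (hcover : ∀ x : ℝ, x ∈ A0 ∨ x ∈ A1 ∨ x ∈ A2) :
    ∃ a b c, a < b ∧ b < c ∧ c < a + 2*π ∧ Set.Icc a b ⊆ A0 ∧
      ((Set.Icc b c ⊆ A1 ∧ Set.Icc c (a + 2*π) ⊆ A2) ∨
       (Set.Icc b c ⊆ A2 ∧ Set.Icc c (a + 2*π) ⊆ A1)) := by
  obtain ⟨θ₀, hθ₀⟩ := hne0
  obtain ⟨θ₁, hθ₁⟩ := hne1
  obtain ⟨θ₂, hθ₂⟩ := hne2
  have hdisj01 : D0 ∩ D1 = ∅ := by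
    apply Set.eq_empty_of_subset_empty; intro x ⟨hx0, hx1⟩
    rw [← hd01]; exact ⟨hsub0 hx0, hx1⟩
  have hdisj02 : D0 ∩ D2 = ∅ := by
    apply Set.eq_empty_of_subset_empty; intro x ⟨hx0, hx2⟩
    rw [← hd02]; exact ⟨hsub0 hx0, hx2⟩
  have hdisj10 : D1 ∩ D0 = ∅ := by
    apply Set.eq_empty_of_subset_empty; intro x ⟨hx1, hx0⟩
    rw [← hd10]; exact ⟨hsub1 hx1, hx0⟩
  have hdisj20 : D2 ∩ D0 = ∅ := by
    apply Set.eq_empty_of_subset_empty; intro x ⟨hx2, hx0⟩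
    rw [← hd20]; exact ⟨hsub2 hx2, hx0⟩
  have hdisj12 : D1 ∩ D2 = ∅ := by
    apply Set.eq_empty_of_subset_empty; intro x ⟨hx1, hx2⟩
    rw [← hd12]; exact ⟨hsub1 hx1, hx2⟩
  -- component of D0
  obtain ⟨p, q, hpθ₀, hθ₀q, hlen, hIoo, hpD, hqD, hchar0⟩ :=
    arc_one D0 D1 hD0 hD1 hD0per hD1per hdisj01 hconn0 hθ₀ hθ₁
  have hpq : p < q := hpθ₀.trans hθ₀q
  have lat0 : A0 ⊆ {x | ∃ k : ℤ, x + 2*π*k ∈ Set.Icc p q} :=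
    fun x hx => lattice_cover hchar0 (hcl0 hx)
  have hIccA0 : Set.Icc p q ⊆ A0 := by
    rw [← closure_Ioo hpq.ne]
    exact (closure_mono (hIoo.trans hsub0)).trans (by rw [hA0.closure_eq])
  -- windows: a representative of D1 and D2 inside (q, p+2π)
  have window : ∀ {Dx : Set ℝ}, (∀ (θ:ℝ) (k:ℤ), θ + 2*π*k ∈ Dx ↔ θ ∈ Dx) →
      (A0 ∩ Dx = ∅) → ∀ {θx}, θx ∈ Dx →
      ∃ η, η ∈ Dx ∧ q < η ∧ η < p + 2*π := by
    intro Dx hDxper hdAx θx hθx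
    obtain ⟨k, hk1, hk2⟩ := shift_into θx q
    set η := θx + 2*π*k with hη
    have hηDx : η ∈ Dx := (hDxper θx k).mpr hθx
    have hηA0 : η ∉ A0 := fun h => by
      have : η ∈ A0 ∩ Dx := ⟨h, hηDx⟩
      rw [hdAx] at this; exact this
    have hηq : q < η := lt_of_le_of_ne hk1 (fun h => hηA0 (h ▸ hIccA0 ⟨hpq.le, le_refl q⟩))
    have hηlt : η < p + 2*π := by
      by_contra hcon
      push_neg at hcon
      apply hηA0
      have hmem : η - 2*π ∈ Set.Icc p q := ⟨by linarith, by linarith⟩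
      have := hIccA0 hmem
      have heq : (η - 2*π) + 2*π*((1:ℤ):ℝ) = η := by push_cast; ring
      exact heq ▸ (hA0per (η - 2*π) 1).mpr this
    exact ⟨η, hηDx, hηq, hηlt⟩
  obtain ⟨η₁, hη₁D, hη₁q, hη₁lt⟩ := window hD1per hd01 hθ₁
  obtain ⟨η₂, hη₂D, hη₂q, hη₂lt⟩ := window hD2per hd02 hθ₂
  -- components of D1 and D2
  obtain ⟨p1, q1, hp1η, hηq1, hlen1, hIoo1, hp1D, hq1D, hchar1⟩ :=
    arc_one D1 D0 hD1 hD0 hD1per hD0per hdisj10 hconn1 hη₁D hθ₀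
  obtain ⟨p2, q2, hp2η, hηq2, hlen2, hIoo2, hp2D, hq2D, hchar2⟩ :=
    arc_one D2 D0 hD2 hD0 hD2per hD0per hdisj20 hconn2 hη₂D hθ₀
  have lat1 : A1 ⊆ {x | ∃ k : ℤ, x + 2*π*k ∈ Set.Icc p1 q1} :=
    fun x hx => lattice_cover hchar1 (hcl1 hx)
  have lat2 : A2 ⊆ {x | ∃ k : ℤ, x + 2*π*k ∈ Set.Icc p2 q2} :=
    fun x hx => lattice_cover hchar2 (hcl2 hx)
  have hIccA1 : Set.Icc p1 q1 ⊆ A1 := by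
    rw [← closure_Ioo (hp1η.trans hηq1).ne]
    exact (closure_mono (hIoo1.trans hsub1)).trans (by rw [hA1.closure_eq])
  have hIccA2 : Set.Icc p2 q2 ⊆ A2 := by
    rw [← closure_Ioo (hp2η.trans hηq2).ne]
    exact (closure_mono (hIoo2.trans hsub2)).trans (by rw [hA2.closure_eq])
  -- the components lie inside the window [q, p+2π]
  have hwin : ∀ {Dx : Set ℝ} {px qx ηx : ℝ}, Set.Ioo px qx ⊆ Dx → (A0 ∩ Dx = ∅) →
      px < ηx → ηx < qx → q < ηx → ηx < p + 2*π → q ≤ px ∧ qx ≤ p + 2*π := by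
    intro Dx px qx ηx hsubx hdAx h1 h2 h3 h4
    have hnotin : ∀ z ∈ A0, z ∉ Dx := by
      intro z hz hzD
      have : z ∈ A0 ∩ Dx := ⟨hz, hzD⟩
      rw [hdAx] at this; exact this
    constructor
    · by_contra hcon
      push_neg at hcon
      exact hnotin q (hIccA0 ⟨hpq.le, le_refl q⟩) (hsubx ⟨hcon, h3.trans h2⟩)
    · by_contra hcon
      push_neg at hcon
      have hmemA0 : p + 2*π ∈ A0 := by
        have := hIccA0 ⟨le_refl p, hpq.le⟩
        have heq : p + 2*π*((1:ℤ):ℝ) = p + 2*π := by push_cast; ring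
        exact heq ▸ (hA0per p 1).mpr this
      exact hnotin (p + 2*π) hmemA0 (hsubx ⟨h1.trans h4, hcon⟩)
  obtain ⟨hqp1, hq1p⟩ := hwin hIoo1 hd01 hp1η hηq1 hη₁q hη₁lt
  obtain ⟨hqp2, hq2p⟩ := hwin hIoo2 hd02 hp2η hηq2 hη₂q hη₂lt
  -- order of the two components
  have horder : q1 ≤ p2 ∨ q2 ≤ p1 := by
    by_contra hcon
    push_neg at hcon
    obtain ⟨h12, h21⟩ := hcon
    have hmM : max p1 p2 < min q1 q2 :=
      max_lt (lt_min (hp1η.trans hηq1) h21) (lt_min h12 (hp2η.trans hηq2))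
    have hl1 : p1 ≤ max p1 p2 := le_max_left p1 p2
    have hl2 : p2 ≤ max p1 p2 := le_max_right p1 p2
    have hr1 : min q1 q2 ≤ q1 := min_le_left q1 q2
    have hr2 : min q1 q2 ≤ q2 := min_le_right q1 q2
    have hmem1 : (max p1 p2 + min q1 q2)/2 ∈ Set.Ioo p1 q1 := ⟨by linarith, by linarith⟩
    have hmem2 : (max p1 p2 + min q1 q2)/2 ∈ Set.Ioo p2 q2 := ⟨by linarith, by linarith⟩
    have : (max p1 p2 + min q1 q2)/2 ∈ D1 ∩ D2 := ⟨hIoo1 hmem1, hIoo2 hmem2⟩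
    rw [hdisj12] at this; exact this
  have hcover' : ∀ x : ℝ, x ∈ A0 ∨ x ∈ A1 ∨ x ∈ A2 := hcover
  rcases horder with hord | hord
  · obtain ⟨e1, e2, e3⟩ := arc_ordered hpq hqp1 (hp1η.trans hηq1) hord
      (hp2η.trans hηq2) hq2p lat0 lat1 lat2 hcover'
    refine ⟨p, q, q1, hpq, ?_, ?_, hIccA0, Or.inl ⟨?_, ?_⟩⟩
    · rw [e1]; exact hp1η.trans hηq1
    · rw [e2]; have := hp2η.trans hηq2; linarith [e3]
    · rw [e1]; exact hIccA1
    · rw [e2, ← e3]; exact hIccA2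
  · obtain ⟨e1, e2, e3⟩ := arc_ordered hpq hqp2 (hp2η.trans hηq2) hord
      (hp1η.trans hηq1) hq1p lat0 lat2 lat1 (fun x => by
        rcases hcover' x with h | h | h
        · exact Or.inl h
        · exact Or.inr (Or.inr h)
        · exact Or.inr (Or.inl h))
    refine ⟨p, q, q2, hpq, ?_, ?_, hIccA0, Or.inr ⟨?_, ?_⟩⟩
    · rw [e1]; exact hp2η.trans hηq2
    · rw [e2]; have := hp1η.trans hηq1; linarith [e3]
    · rw [e1]; exact hIccA2
    · rw [e2, ← e3]; exact hIccA1
section OneD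

def IsPerm3 {α : Type*} (p q r u₀ u₁ u₂ : α) : Prop :=
  (p = u₀ ∧ q = u₁ ∧ r = u₂) ∨ (p = u₀ ∧ q = u₂ ∧ r = u₁) ∨
  (p = u₁ ∧ q = u₀ ∧ r = u₂) ∨ (p = u₁ ∧ q = u₂ ∧ r = u₀) ∨
  (p = u₂ ∧ q = u₀ ∧ r = u₁) ∨ (p = u₂ ∧ q = u₁ ∧ r = u₀)

lemma isPerm3_rot {α : Type*} {p q r u₀ u₁ u₂ : α} (h : IsPerm3 p q r u₁ u₂ u₀) :
    IsPerm3 p q r u₀ u₁ u₂ := by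
  unfold IsPerm3 at *; tauto

lemma isPerm3_swap {α : Type*} {p q r u₀ u₁ u₂ : α} (h : IsPerm3 p q r u₀ u₂ u₁) :
    IsPerm3 p q r u₀ u₁ u₂ := by
  unfold IsPerm3 at *; tauto

/-- max/min helpers -/
lemma eq_max3_left {x y z : ℝ} (h1 : y ≤ x) (h2 : z ≤ x) : x = max x (max y z) :=
  (max_eq_left (max_le h1 h2)).symm
lemma eq_max3_mid {x y z : ℝ} (h1 : x ≤ y) (h2 : z ≤ y) : y = max x (max y z) := by
  rw [max_eq_left h2, max_eq_right h1]
lemma eq_max3_right {x y z : ℝ} (h1 : x ≤ z) (h2 : y ≤ z) : z = max x (max y z) := by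
  rw [max_eq_right h2, max_eq_right h1]
lemma eq_min3_left {x y z : ℝ} (h1 : x ≤ y) (h2 : x ≤ z) : x = min x (min y z) :=
  (min_eq_left (le_min h1 h2)).symm
lemma eq_min3_mid {x y z : ℝ} (h1 : y ≤ x) (h2 : y ≤ z) : y = min x (min y z) := by
  rw [min_eq_left h2, min_eq_right h1]
lemma eq_min3_right {x y z : ℝ} (h1 : z ≤ x) (h2 : z ≤ y) : z = min x (min y z) := by
  rw [min_eq_right h2, min_eq_right h1]
lemma eq_maxmin_left {x y z : ℝ} (h : y ≤ x ∨ z ≤ x) : x = max x (min y z) := by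
  rcases h with h | h
  · exact (max_eq_left ((min_le_left y z).trans h)).symm
  · exact (max_eq_left ((min_le_right y z).trans h)).symm
lemma eq_maxmin_mid {x y z : ℝ} (h1 : x ≤ y) (h2 : y ≤ z) : y = max x (min y z) := by
  rw [min_eq_left h2, max_eq_right h1]
lemma eq_maxmin_right {x y z : ℝ} (h1 : x ≤ z) (h2 : z ≤ y) : z = max x (min y z) := by
  rw [min_eq_right h2, max_eq_right h1]
lemma eq_minmax_left {x y z : ℝ} (h : x ≤ y ∨ x ≤ z) : x = min x (max y z) := by
  rcases h with h | h
  · exact (min_eq_left (h.trans (le_max_left y z))).symm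
  · exact (min_eq_left (h.trans (le_max_right y z))).symm
lemma eq_minmax_mid {x y z : ℝ} (h1 : y ≤ x) (h2 : z ≤ y) : y = min x (max y z) := by
  rw [max_eq_left h2, min_eq_right h1]
lemma eq_minmax_right {x y z : ℝ} (h1 : z ≤ x) (h2 : y ≤ z) : z = min x (max y z) := by
  rw [max_eq_right h2, min_eq_right h1]

lemma mnn {x y : ℝ} (hx : x ≤ 0) (hy : y ≤ 0) : 0 ≤ x * y := by nlinarith
lemma mnp {x y : ℝ} (hx : x ≤ 0) (hy : 0 ≤ y) : x * y ≤ 0 := by nlinarith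
lemma mpn {x y : ℝ} (hx : 0 ≤ x) (hy : y ≤ 0) : x * y ≤ 0 := by nlinarith
lemma mpp {x y : ℝ} (hx : 0 ≤ x) (hy : 0 ≤ y) : 0 ≤ x * y := mul_nonneg hx hy

/-- sinusoid with constant offset -/
def Sinu (C : ℝ) (g : ℝ → ℝ) : Prop :=
  ∃ α β : ℝ, ∀ θ, g θ = C + α * Real.cos θ + β * Real.sin θ

lemma sinu_per {C : ℝ} {g : ℝ → ℝ} (hg : Sinu C g) : ∀ θ, g (θ + 2*π) = g θ := by
  obtain ⟨α, β, he⟩ := hg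
  intro θ
  rw [he, he, Real.cos_add_two_pi, Real.sin_add_two_pi]

/-- key representation: the difference of two equal-offset sinusoids vanishing at z -/
lemma sinu_rep {C : ℝ} {g0 g1 : ℝ → ℝ} (h0 : Sinu C g0) (h1 : Sinu C g1) {z : ℝ}
    (hz : g0 z = g1 z) : ∃ K, ∀ θ, g0 θ - g1 θ = K * Real.sin (θ - z) := by
  obtain ⟨α0, β0, he0⟩ := h0
  obtain ⟨α1, β1, he1⟩ := h1
  set α := α0 - α1 with hα
  set β := β0 - β1 with hβ
  have hzz : α * Real.cos z + β * Real.sin z = 0 := by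
    rw [hα, hβ]
    have := hz
    rw [he0, he1] at this
    linarith
  refine ⟨β * Real.cos z - α * Real.sin z, fun θ => ?_⟩
  rw [he0, he1, Real.sin_sub]
  have hpy := Real.sin_sq_add_cos_sq z
  have : α0 * Real.cos θ + β0 * Real.sin θ - (α1 * Real.cos θ + β1 * Real.sin θ)
      = α * Real.cos θ + β * Real.sin θ := by rw [hα, hβ]; ring
  rw [show C + α0 * Real.cos θ + β0 * Real.sin θ - (C + α1 * Real.cos θ + β1 * Real.sin θ)
      = α * Real.cos θ + β * Real.sin θ by rw [hα, hβ]; ring]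
  linear_combination (Real.cos θ * Real.cos z + Real.sin θ * Real.sin z) * hzz -
    (α * Real.cos θ + β * Real.sin θ) * hpy

/-- sign lemmas for sin on shifted intervals -/
lemma sin_neg_of_mem {x : ℝ} (h1 : -π ≤ x) (h2 : x ≤ 0) : Real.sin x ≤ 0 :=
  Real.sin_nonpos_of_nonpos_of_neg_pi_le h2 h1
lemma sin_pos_of_mem {x : ℝ} (h1 : 0 ≤ x) (h2 : x ≤ π) : 0 ≤ Real.sin x :=
  Real.sin_nonneg_of_nonneg_of_le_pi h1 h2
lemma sin_neg_of_mem' {x : ℝ} (h1 : π ≤ x) (h2 : x ≤ 2*π) : Real.sin x ≤ 0 := by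
  have h := Real.sin_nonneg_of_nonneg_of_le_pi (x := x - π) (by linarith) (by linarith)
  rw [Real.sin_sub_pi] at h
  linarith
lemma sin_neg_strict {x : ℝ} (h1 : π < x) (h2 : x < 2*π) : Real.sin x < 0 := by
  have h := Real.sin_pos_of_pos_of_lt_pi (x := x - π) (by linarith) (by linarith)
  rw [Real.sin_sub_pi] at h
  linarith

lemma per_int {f : ℝ → ℝ} (hf : ∀ θ, f (θ + 2*π) = f θ) (θ : ℝ) (k : ℤ) :
    f (θ + 2*π*k) = f θ := by
  induction k using Int.induction_on with
  | zero => simp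
  | succ n ih =>
    have he : θ + 2*π*((n:ℤ)+1 : ℤ) = (θ + 2*π*(n:ℤ)) + 2*π := by push_cast; ring
    rw [he, hf, ih]
  | pred n ih =>
    have he : θ + 2*π*(-(n:ℤ)-1 : ℤ) + 2*π = θ + 2*π*(-(n:ℤ) : ℤ) := by push_cast; ring
    rw [← ih, ← he, hf]

lemma extend_per {h F : ℝ → ℝ} (hper : ∀ θ, h (θ + 2*π) = h θ)
    (hFper : ∀ θ, F (θ + 2*π) = F θ) {a : ℝ}
    (heq : ∀ θ ∈ Set.Icc a (a + 2*π), h θ = F θ) : ∀ θ, h θ = F θ := by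
  intro θ
  obtain ⟨k, hk1, hk2⟩ := shift_into θ a
  have h1 : h (θ + 2*π*k) = h θ := per_int hper θ k
  have h2 : F (θ + 2*π*k) = F θ := per_int hFper θ k
  rw [← h1, ← h2]
  exact heq _ ⟨hk1, hk2.le⟩

lemma eqOn_shift {h g : ℝ → ℝ} (hper : ∀ θ, h (θ + 2*π) = h θ)
    (hgper : ∀ θ, g (θ + 2*π) = g θ) {x y : ℝ}
    (e : ∀ θ ∈ Set.Icc x y, h θ = g θ) :
    ∀ θ ∈ Set.Icc (x + 2*π) (y + 2*π), h θ = g θ := by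
  intro θ hθ
  have hmem : θ - 2*π ∈ Set.Icc x y := ⟨by linarith [hθ.1], by linarith [hθ.2]⟩
  have he : θ - 2*π + 2*π = θ := by ring
  have h1 := hper (θ - 2*π); rw [he] at h1
  have h2 := hgper (θ - 2*π); rw [he] at h2
  rw [h1, h2]
  exact e _ hmem

def LocConcl (a : ℝ) (h g0 g1 g2 : ℝ → ℝ) : Prop :=
  ∃ p q r : ℝ → ℝ, IsPerm3 p q r g0 g1 g2 ∧
    ((∀ θ ∈ Set.Icc a (a + 2*π), h θ = max (p θ) (max (q θ) (r θ))) ∨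
     (∀ θ ∈ Set.Icc a (a + 2*π), h θ = min (p θ) (min (q θ) (r θ))) ∨
     (∀ θ ∈ Set.Icc a (a + 2*π), h θ = max (p θ) (min (q θ) (r θ))) ∨
     (∀ θ ∈ Set.Icc a (a + 2*π), h θ = min (p θ) (max (q θ) (r θ))))

def GlobConcl (h g0 g1 g2 : ℝ → ℝ) : Prop :=
  ∃ p q r : ℝ → ℝ, IsPerm3 p q r g0 g1 g2 ∧
    ((∀ θ, h θ = max (p θ) (max (q θ) (r θ))) ∨
     (∀ θ, h θ = min (p θ) (min (q θ) (r θ))) ∨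
     (∀ θ, h θ = max (p θ) (min (q θ) (r θ))) ∨
     (∀ θ, h θ = min (p θ) (max (q θ) (r θ))))

lemma perm3_per {p q r g0 g1 g2 : ℝ → ℝ} (hperm : IsPerm3 p q r g0 g1 g2)
    (h0 : ∀ θ, g0 (θ + 2*π) = g0 θ) (h1 : ∀ θ, g1 (θ + 2*π) = g1 θ)
    (h2 : ∀ θ, g2 (θ + 2*π) = g2 θ) :
    (∀ θ, p (θ + 2*π) = p θ) ∧ (∀ θ, q (θ + 2*π) = q θ) ∧ (∀ θ, r (θ + 2*π) = r θ) := by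
  rcases hperm with ⟨e1,e2,e3⟩|⟨e1,e2,e3⟩|⟨e1,e2,e3⟩|⟨e1,e2,e3⟩|⟨e1,e2,e3⟩|⟨e1,e2,e3⟩ <;>
    subst e1 <;> subst e2 <;> subst e3 <;> exact ⟨by assumption, by assumption, by assumption⟩

lemma loc_to_glob {a : ℝ} {h g0 g1 g2 : ℝ → ℝ} (hper : ∀ θ, h (θ + 2*π) = h θ)
    (h0 : ∀ θ, g0 (θ + 2*π) = g0 θ) (h1 : ∀ θ, g1 (θ + 2*π) = g1 θ)
    (h2 : ∀ θ, g2 (θ + 2*π) = g2 θ)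
    (hloc : LocConcl a h g0 g1 g2) : GlobConcl h g0 g1 g2 := by
  obtain ⟨p, q, r, hperm, hforms⟩ := hloc
  obtain ⟨pp, pq, pr⟩ := perm3_per hperm h0 h1 h2
  refine ⟨p, q, r, hperm, ?_⟩
  rcases hforms with hf | hf | hf | hf
  · exact Or.inl (extend_per hper (fun θ => by rw [pp, pq, pr]) hf)
  · exact Or.inr (Or.inl (extend_per hper (fun θ => by rw [pp, pq, pr]) hf))
  · exact Or.inr (Or.inr (Or.inl (extend_per hper (fun θ => by rw [pp, pq, pr]) hf)))
  · exact Or.inr (Or.inr (Or.inr (extend_per hper (fun θ => by rw [pp, pq, pr]) hf)))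

lemma glob_rot {h g0 g1 g2 : ℝ → ℝ} (hg : GlobConcl h g1 g2 g0) : GlobConcl h g0 g1 g2 := by
  obtain ⟨p, q, r, hperm, hforms⟩ := hg
  exact ⟨p, q, r, isPerm3_rot hperm, hforms⟩

lemma glob_swap {h g0 g1 g2 : ℝ → ℝ} (hg : GlobConcl h g0 g2 g1) : GlobConcl h g0 g1 g2 := by
  obtain ⟨p, q, r, hperm, hforms⟩ := hg
  exact ⟨p, q, r, isPerm3_swap hperm, hforms⟩

end OneD
section CaseLemmas

lemma permId {α : Type*} (g0 g1 g2 : α) : IsPerm3 g0 g1 g2 g0 g1 g2 :=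
  Or.inl ⟨rfl, rfl, rfl⟩
lemma perm120 {α : Type*} (g0 g1 g2 : α) : IsPerm3 g1 g2 g0 g0 g1 g2 :=
  Or.inr (Or.inr (Or.inr (Or.inl ⟨rfl, rfl, rfl⟩)))
lemma perm201 {α : Type*} (g0 g1 g2 : α) : IsPerm3 g2 g0 g1 g0 g1 g2 :=
  Or.inr (Or.inr (Or.inr (Or.inr (Or.inl ⟨rfl, rfl, rfl⟩))))

lemma caseI {a b c : ℝ} {h g0 g1 g2 : ℝ → ℝ} {K1 K2 K3 : ℝ}
    (hab : a < b) (hbc : b < c) (hca : c < a + 2*π)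
    (l0 : b - a ≤ π) (l1 : c - b ≤ π) (l2 : a + 2*π - c ≤ π)
    (hd1 : ∀ θ, g0 θ - g1 θ = K1 * Real.sin (θ - b))
    (hd2 : ∀ θ, g1 θ - g2 θ = K2 * Real.sin (θ - c))
    (hd3 : ∀ θ, g2 θ - g0 θ = K3 * Real.sin (θ - a))
    (e0 : ∀ θ ∈ Set.Icc a b, h θ = g0 θ)
    (e1 : ∀ θ ∈ Set.Icc b c, h θ = g1 θ)
    (e2 : ∀ θ ∈ Set.Icc c (a+2*π), h θ = g2 θ) :
    LocConcl a h g0 g1 g2 := by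
  have s0b : ∀ θ ∈ Set.Icc a b, Real.sin (θ - b) ≤ 0 :=
    fun θ hθ => sin_neg_of_mem (by linarith [hθ.1]) (by linarith [hθ.2])
  have s0a : ∀ θ ∈ Set.Icc a b, 0 ≤ Real.sin (θ - a) :=
    fun θ hθ => sin_pos_of_mem (by linarith [hθ.1]) (by linarith [hθ.2])
  have s1b : ∀ θ ∈ Set.Icc b c, 0 ≤ Real.sin (θ - b) :=
    fun θ hθ => sin_pos_of_mem (by linarith [hθ.1]) (by linarith [hθ.2])
  have s1c : ∀ θ ∈ Set.Icc b c, Real.sin (θ - c) ≤ 0 :=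
    fun θ hθ => sin_neg_of_mem (by linarith [hθ.1]) (by linarith [hθ.2])
  have s2c : ∀ θ ∈ Set.Icc c (a+2*π), 0 ≤ Real.sin (θ - c) :=
    fun θ hθ => sin_pos_of_mem (by linarith [hθ.1]) (by linarith [hθ.2])
  have s2a : ∀ θ ∈ Set.Icc c (a+2*π), Real.sin (θ - a) ≤ 0 :=
    fun θ hθ => sin_neg_of_mem' (by linarith [hθ.1]) (by linarith [hθ.2])
  have main : ∀ (F : ℝ → ℝ),
      (∀ θ ∈ Set.Icc a b, g0 θ = F θ) → (∀ θ ∈ Set.Icc b c, g1 θ = F θ) →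
      (∀ θ ∈ Set.Icc c (a+2*π), g2 θ = F θ) →
      ∀ θ ∈ Set.Icc a (a+2*π), h θ = F θ := by
    intro F hF0 hF1 hF2 θ hθ
    rcases le_total θ b with hb' | hb'
    · rw [e0 θ ⟨hθ.1, hb'⟩]; exact hF0 θ ⟨hθ.1, hb'⟩
    · rcases le_total θ c with hc' | hc'
      · rw [e1 θ ⟨hb', hc'⟩]; exact hF1 θ ⟨hb', hc'⟩
      · rw [e2 θ ⟨hc', hθ.2⟩]; exact hF2 θ ⟨hc', hθ.2⟩
  rcases le_total K1 0 with hK1 | hK1 <;> rcases le_total K2 0 with hK2 | hK2 <;>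
    rcases le_total K3 0 with hK3 | hK3
  · -- (m,m,m) : max3, identity
    refine ⟨g0, g1, g2, permId g0 g1 g2, Or.inl (main _ ?_ ?_ ?_)⟩
    · intro θ hθ
      have t1 : 0 ≤ g0 θ - g1 θ := by rw [hd1 θ]; exact mnn hK1 (s0b θ hθ)
      have t2 : g2 θ - g0 θ ≤ 0 := by rw [hd3 θ]; exact mnp hK3 (s0a θ hθ)
      exact eq_max3_left (by linarith) (by linarith)
    · intro θ hθ
      have t1 : g0 θ - g1 θ ≤ 0 := by rw [hd1 θ]; exact mnp hK1 (s1b θ hθ)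
      have t2 : 0 ≤ g1 θ - g2 θ := by rw [hd2 θ]; exact mnn hK2 (s1c θ hθ)
      exact eq_max3_mid (by linarith) (by linarith)
    · intro θ hθ
      have t1 : 0 ≤ g2 θ - g0 θ := by rw [hd3 θ]; exact mnn hK3 (s2a θ hθ)
      have t2 : g1 θ - g2 θ ≤ 0 := by rw [hd2 θ]; exact mnp hK2 (s2c θ hθ)
      exact eq_max3_right (by linarith) (by linarith)
  · -- (m,m,p) : form3 with (g1,g2,g0)
    refine ⟨g1, g2, g0, perm120 g0 g1 g2, Or.inr (Or.inr (Or.inl (main _ ?_ ?_ ?_)))⟩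
    · intro θ hθ -- region 0, value g0 = "z" : eq_maxmin_right
      have t1 : 0 ≤ g0 θ - g1 θ := by rw [hd1 θ]; exact mnn hK1 (s0b θ hθ)
      have t2 : 0 ≤ g2 θ - g0 θ := by rw [hd3 θ]; exact mpp hK3 (s0a θ hθ)
      exact eq_maxmin_right (by linarith) (by linarith)
    · intro θ hθ -- region 1, value g1 = "x" : eq_maxmin_left
      have t1 : 0 ≤ g1 θ - g2 θ := by rw [hd2 θ]; exact mnn hK2 (s1c θ hθ)
      exact eq_maxmin_left (Or.inl (by linarith))
    · intro θ hθ -- region 2, value g2 = "y" : eq_maxmin_mid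
      have t1 : g1 θ - g2 θ ≤ 0 := by rw [hd2 θ]; exact mnp hK2 (s2c θ hθ)
      have t2 : g2 θ - g0 θ ≤ 0 := by rw [hd3 θ]; exact mpn hK3 (s2a θ hθ)
      exact eq_maxmin_mid (by linarith) (by linarith)
  · -- (m,p,m) : form3 with (g0,g1,g2)
    refine ⟨g0, g1, g2, permId g0 g1 g2, Or.inr (Or.inr (Or.inl (main _ ?_ ?_ ?_)))⟩
    · intro θ hθ
      have t1 : 0 ≤ g0 θ - g1 θ := by rw [hd1 θ]; exact mnn hK1 (s0b θ hθ)
      exact eq_maxmin_left (Or.inl (by linarith))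
    · intro θ hθ
      have t1 : g0 θ - g1 θ ≤ 0 := by rw [hd1 θ]; exact mnp hK1 (s1b θ hθ)
      have t2 : g1 θ - g2 θ ≤ 0 := by rw [hd2 θ]; exact mpn hK2 (s1c θ hθ)
      exact eq_maxmin_mid (by linarith) (by linarith)
    · intro θ hθ
      have t1 : 0 ≤ g2 θ - g0 θ := by rw [hd3 θ]; exact mnn hK3 (s2a θ hθ)
      have t2 : 0 ≤ g1 θ - g2 θ := by rw [hd2 θ]; exact mpp hK2 (s2c θ hθ)
      exact eq_maxmin_right (by linarith) (by linarith)
  · -- (m,p,p) : form4 with (g2,g0,g1)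
    refine ⟨g2, g0, g1, perm201 g0 g1 g2, Or.inr (Or.inr (Or.inr (main _ ?_ ?_ ?_)))⟩
    · intro θ hθ -- region 0, g0 = "y" : eq_minmax_mid
      have t1 : 0 ≤ g2 θ - g0 θ := by rw [hd3 θ]; exact mpp hK3 (s0a θ hθ)
      have t2 : 0 ≤ g0 θ - g1 θ := by rw [hd1 θ]; exact mnn hK1 (s0b θ hθ)
      exact eq_minmax_mid (by linarith) (by linarith)
    · intro θ hθ -- region 1, g1 = "z" : eq_minmax_right
      have t1 : g1 θ - g2 θ ≤ 0 := by rw [hd2 θ]; exact mpn hK2 (s1c θ hθ)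
      have t2 : g0 θ - g1 θ ≤ 0 := by rw [hd1 θ]; exact mnp hK1 (s1b θ hθ)
      exact eq_minmax_right (by linarith) (by linarith)
    · intro θ hθ -- region 2, g2 = "x" : eq_minmax_left
      have t1 : g2 θ - g0 θ ≤ 0 := by rw [hd3 θ]; exact mpn hK3 (s2a θ hθ)
      exact eq_minmax_left (Or.inl (by linarith))
  · -- (p,m,m) : form3 with (g2,g0,g1)
    refine ⟨g2, g0, g1, perm201 g0 g1 g2, Or.inr (Or.inr (Or.inl (main _ ?_ ?_ ?_)))⟩
    · intro θ hθ -- region 0, g0 = "y" : eq_maxmin_mid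
      have t1 : g2 θ - g0 θ ≤ 0 := by rw [hd3 θ]; exact mnp hK3 (s0a θ hθ)
      have t2 : g0 θ - g1 θ ≤ 0 := by rw [hd1 θ]; exact mpn hK1 (s0b θ hθ)
      exact eq_maxmin_mid (by linarith) (by linarith)
    · intro θ hθ -- region 1, g1 = "z" : eq_maxmin_right
      have t1 : 0 ≤ g1 θ - g2 θ := by rw [hd2 θ]; exact mnn hK2 (s1c θ hθ)
      have t2 : 0 ≤ g0 θ - g1 θ := by rw [hd1 θ]; exact mpp hK1 (s1b θ hθ)
      exact eq_maxmin_right (by linarith) (by linarith)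
    · intro θ hθ -- region 2, g2 = "x" : eq_maxmin_left
      have t1 : 0 ≤ g2 θ - g0 θ := by rw [hd3 θ]; exact mnn hK3 (s2a θ hθ)
      exact eq_maxmin_left (Or.inl (by linarith))
  · -- (p,m,p) : form4 with (g0,g1,g2)
    refine ⟨g0, g1, g2, permId g0 g1 g2, Or.inr (Or.inr (Or.inr (main _ ?_ ?_ ?_)))⟩
    · intro θ hθ
      have t1 : g0 θ - g1 θ ≤ 0 := by rw [hd1 θ]; exact mpn hK1 (s0b θ hθ)
      exact eq_minmax_left (Or.inl (by linarith))
    · intro θ hθ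
      have t1 : 0 ≤ g0 θ - g1 θ := by rw [hd1 θ]; exact mpp hK1 (s1b θ hθ)
      have t2 : 0 ≤ g1 θ - g2 θ := by rw [hd2 θ]; exact mnn hK2 (s1c θ hθ)
      exact eq_minmax_mid (by linarith) (by linarith)
    · intro θ hθ
      have t1 : g2 θ - g0 θ ≤ 0 := by rw [hd3 θ]; exact mpn hK3 (s2a θ hθ)
      have t2 : g1 θ - g2 θ ≤ 0 := by rw [hd2 θ]; exact mnp hK2 (s2c θ hθ)
      exact eq_minmax_right (by linarith) (by linarith)
  · -- (p,p,m) : form4 with (g1,g2,g0)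
    refine ⟨g1, g2, g0, perm120 g0 g1 g2, Or.inr (Or.inr (Or.inr (main _ ?_ ?_ ?_)))⟩
    · intro θ hθ -- region 0, g0 = "z" : eq_minmax_right
      have t1 : g0 θ - g1 θ ≤ 0 := by rw [hd1 θ]; exact mpn hK1 (s0b θ hθ)
      have t2 : g2 θ - g0 θ ≤ 0 := by rw [hd3 θ]; exact mnp hK3 (s0a θ hθ)
      exact eq_minmax_right (by linarith) (by linarith)
    · intro θ hθ -- region 1, g1 = "x" : eq_minmax_left
      have t1 : g1 θ - g2 θ ≤ 0 := by rw [hd2 θ]; exact mpn hK2 (s1c θ hθ)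
      exact eq_minmax_left (Or.inl (by linarith))
    · intro θ hθ -- region 2, g2 = "y" : eq_minmax_mid
      have t1 : 0 ≤ g1 θ - g2 θ := by rw [hd2 θ]; exact mpp hK2 (s2c θ hθ)
      have t2 : 0 ≤ g2 θ - g0 θ := by rw [hd3 θ]; exact mnn hK3 (s2a θ hθ)
      exact eq_minmax_mid (by linarith) (by linarith)
  · -- (p,p,p) : min3, identity
    refine ⟨g0, g1, g2, permId g0 g1 g2, Or.inr (Or.inl (main _ ?_ ?_ ?_))⟩
    · intro θ hθ
      have t1 : g0 θ - g1 θ ≤ 0 := by rw [hd1 θ]; exact mpn hK1 (s0b θ hθ)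
      have t2 : 0 ≤ g2 θ - g0 θ := by rw [hd3 θ]; exact mpp hK3 (s0a θ hθ)
      exact eq_min3_left (by linarith) (by linarith)
    · intro θ hθ
      have t1 : 0 ≤ g0 θ - g1 θ := by rw [hd1 θ]; exact mpp hK1 (s1b θ hθ)
      have t2 : g1 θ - g2 θ ≤ 0 := by rw [hd2 θ]; exact mpn hK2 (s1c θ hθ)
      exact eq_min3_mid (by linarith) (by linarith)
    · intro θ hθ
      have t1 : g2 θ - g0 θ ≤ 0 := by rw [hd3 θ]; exact mpn hK3 (s2a θ hθ)
      have t2 : 0 ≤ g1 θ - g2 θ := by rw [hd2 θ]; exact mpp hK2 (s2c θ hθ)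
      exact eq_min3_right (by linarith) (by linarith)

end CaseLemmas
lemma caseII {a b c : ℝ} {h g0 g1 g2 : ℝ → ℝ} {K1 K2 K3 : ℝ}
    (hab : a < b) (hbc : b < c) (hca : c < a + 2*π)
    (l0 : π < b - a)
    (hd1 : ∀ θ, g0 θ - g1 θ = K1 * Real.sin (θ - b))
    (hd2 : ∀ θ, g1 θ - g2 θ = K2 * Real.sin (θ - c))
    (hd3 : ∀ θ, g2 θ - g0 θ = K3 * Real.sin (θ - a))
    (e0 : ∀ θ ∈ Set.Icc a b, h θ = g0 θ)
    (e1 : ∀ θ ∈ Set.Icc b c, h θ = g1 θ)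
    (e2 : ∀ θ ∈ Set.Icc c (a+2*π), h θ = g2 θ) :
    LocConcl a h g0 g1 g2 := by
  have hb2 : b - a < 2*π := by linarith
  have hl1 : 0 < c - b := by linarith
  have hl2 : 0 < a + 2*π - c := by linarith
  have hl1' : c - b < π := by linarith
  have hl2' : a + 2*π - c < π := by linarith
  set S0 := Real.sin (b - a) with hS0def
  set S1 := Real.sin (c - b) with hS1def
  set S2 := Real.sin (a + 2*π - c) with hS2def
  have hS0 : S0 < 0 := sin_neg_strict l0 hb2
  have hS1 : 0 < S1 := Real.sin_pos_of_pos_of_lt_pi hl1 hl1'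
  have hS2 : 0 < S2 := Real.sin_pos_of_pos_of_lt_pi hl2 hl2'
  have I : ∀ θ, K1 * Real.sin (θ - b) + K2 * Real.sin (θ - c) + K3 * Real.sin (θ - a) = 0 := by
    intro θ
    have h1 := hd1 θ; have h2 := hd2 θ; have h3 := hd3 θ
    linarith
  have hA : K2 * S2 = K1 * S0 := by
    have hI := I a
    rw [sub_self, Real.sin_zero, mul_zero, add_zero] at hI
    have e1' : a - b = -(b - a) := by ring
    have e2' : a - c = (a + 2*π - c) - 2*π := by ring
    rw [e1', Real.sin_neg, e2', Real.sin_sub_two_pi] at hI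
    rw [← hS0def, ← hS2def] at hI
    linarith
  have hC : K1 * S1 = K3 * S2 := by
    have hI := I c
    rw [sub_self, Real.sin_zero, mul_zero] at hI
    have e1' : c - a = -((a + 2*π - c) - 2*π) := by ring
    rw [e1', Real.sin_neg, Real.sin_sub_two_pi] at hI
    rw [← hS1def, ← hS2def] at hI
    linarith
  have s1b : ∀ θ ∈ Set.Icc b c, 0 ≤ Real.sin (θ - b) :=
    fun θ hθ => sin_pos_of_mem (by linarith [hθ.1]) (by linarith [hθ.2])
  have s1c : ∀ θ ∈ Set.Icc b c, Real.sin (θ - c) ≤ 0 :=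
    fun θ hθ => sin_neg_of_mem (by linarith [hθ.1]) (by linarith [hθ.2])
  have s2c : ∀ θ ∈ Set.Icc c (a+2*π), 0 ≤ Real.sin (θ - c) :=
    fun θ hθ => sin_pos_of_mem (by linarith [hθ.1]) (by linarith [hθ.2])
  have s2a : ∀ θ ∈ Set.Icc c (a+2*π), Real.sin (θ - a) ≤ 0 :=
    fun θ hθ => sin_neg_of_mem' (by linarith [hθ.1]) (by linarith [hθ.2])
  have s0a' : ∀ θ ∈ Set.Icc a b, θ ≤ a + π → 0 ≤ Real.sin (θ - a) :=
    fun θ hθ hπ => sin_pos_of_mem (by linarith [hθ.1]) (by linarith)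
  have s0b' : ∀ θ ∈ Set.Icc a b, a + π ≤ θ → Real.sin (θ - b) ≤ 0 :=
    fun θ hθ hπ => sin_neg_of_mem (by linarith) (by linarith [hθ.2])
  have main : ∀ (F : ℝ → ℝ),
      (∀ θ ∈ Set.Icc a b, g0 θ = F θ) → (∀ θ ∈ Set.Icc b c, g1 θ = F θ) →
      (∀ θ ∈ Set.Icc c (a+2*π), g2 θ = F θ) →
      ∀ θ ∈ Set.Icc a (a+2*π), h θ = F θ := by
    intro F hF0 hF1 hF2 θ hθ
    rcases le_total θ b with hb' | hb'
    · rw [e0 θ ⟨hθ.1, hb'⟩]; exact hF0 θ ⟨hθ.1, hb'⟩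
    · rcases le_total θ c with hc' | hc'
      · rw [e1 θ ⟨hb', hc'⟩]; exact hF1 θ ⟨hb', hc'⟩
      · rw [e2 θ ⟨hc', hθ.2⟩]; exact hF2 θ ⟨hc', hθ.2⟩
  -- helper to conclude the degenerate (all equal) case
  have degen : K1 = 0 → K2 = 0 → K3 = 0 → LocConcl a h g0 g1 g2 := by
    intro z1 z2 z3
    refine ⟨g0, g1, g2, permId g0 g1 g2, Or.inl (main _ ?_ ?_ ?_)⟩
    · intro θ hθ
      have t1 : g0 θ - g1 θ = 0 := by rw [hd1 θ, z1]; ring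
      have t2 : g2 θ - g0 θ = 0 := by rw [hd3 θ, z3]; ring
      exact eq_max3_left (by linarith) (by linarith)
    · intro θ hθ
      have t1 : g0 θ - g1 θ = 0 := by rw [hd1 θ, z1]; ring
      have t2 : g1 θ - g2 θ = 0 := by rw [hd2 θ, z2]; ring
      exact eq_max3_mid (by linarith) (by linarith)
    · intro θ hθ
      have t1 : g2 θ - g0 θ = 0 := by rw [hd3 θ, z3]; ring
      have t2 : g1 θ - g2 θ = 0 := by rw [hd2 θ, z2]; ring
      exact eq_max3_right (by linarith) (by linarith)
  rcases le_total K1 0 with hK1 | hK1 <;> rcases le_total K3 0 with hK3 | hK3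
  · -- main convex-ish case : h = max (g0, min (g1, g2))
    have hK2 : 0 ≤ K2 := by
      by_contra hcon
      push_neg at hcon
      have h1 : 0 ≤ K1 * S0 := mnn hK1 hS0.le
      have h2 : K2 * S2 < 0 := mul_neg_of_neg_of_pos hcon hS2
      linarith [hA]
    refine ⟨g0, g1, g2, permId g0 g1 g2, Or.inr (Or.inr (Or.inl (main _ ?_ ?_ ?_)))⟩
    · intro θ hθ
      rcases le_total θ (a + π) with hπ | hπ
      · have t1 : g2 θ - g0 θ ≤ 0 := by rw [hd3 θ]; exact mnp hK3 (s0a' θ hθ hπ)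
        exact eq_maxmin_left (Or.inr (by linarith))
      · have t1 : 0 ≤ g0 θ - g1 θ := by rw [hd1 θ]; exact mnn hK1 (s0b' θ hθ hπ)
        exact eq_maxmin_left (Or.inl (by linarith))
    · intro θ hθ
      have t1 : g0 θ - g1 θ ≤ 0 := by rw [hd1 θ]; exact mnp hK1 (s1b θ hθ)
      have t2 : g1 θ - g2 θ ≤ 0 := by rw [hd2 θ]; exact mpn hK2 (s1c θ hθ)
      exact eq_maxmin_mid (by linarith) (by linarith)
    · intro θ hθ
      have t1 : 0 ≤ g2 θ - g0 θ := by rw [hd3 θ]; exact mnn hK3 (s2a θ hθ)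
      have t2 : 0 ≤ g1 θ - g2 θ := by rw [hd2 θ]; exact mpp hK2 (s2c θ hθ)
      exact eq_maxmin_right (by linarith) (by linarith)
  · -- mixed : K1 ≤ 0 ≤ K3 forces degeneracy
    have z13 : K1 * S1 = 0 := by
      have t1 : K1 * S1 ≤ 0 := mnp hK1 hS1.le
      have t2 : 0 ≤ K3 * S2 := mpp hK3 hS2.le
      linarith [hC]
    have z1 : K1 = 0 := by
      rcases mul_eq_zero.mp z13 with h | h
      · exact h
      · exact absurd h (ne_of_gt hS1)
    have z3 : K3 = 0 := by
      have : K3 * S2 = 0 := by rw [← hC, z1]; ring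
      rcases mul_eq_zero.mp this with h | h
      · exact h
      · exact absurd h (ne_of_gt hS2)
    have z2 : K2 = 0 := by
      have : K2 * S2 = 0 := by rw [hA, z1]; ring
      rcases mul_eq_zero.mp this with h | h
      · exact h
      · exact absurd h (ne_of_gt hS2)
    exact degen z1 z2 z3
  · -- mixed : K3 ≤ 0 ≤ K1 forces degeneracy
    have z13 : K1 * S1 = 0 := by
      have t1 : 0 ≤ K1 * S1 := mpp hK1 hS1.le
      have t2 : K3 * S2 ≤ 0 := mnp hK3 hS2.le
      linarith [hC]
    have z1 : K1 = 0 := by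
      rcases mul_eq_zero.mp z13 with h | h
      · exact h
      · exact absurd h (ne_of_gt hS1)
    have z3 : K3 = 0 := by
      have : K3 * S2 = 0 := by rw [← hC, z1]; ring
      rcases mul_eq_zero.mp this with h | h
      · exact h
      · exact absurd h (ne_of_gt hS2)
    have z2 : K2 = 0 := by
      have : K2 * S2 = 0 := by rw [hA, z1]; ring
      rcases mul_eq_zero.mp this with h | h
      · exact h
      · exact absurd h (ne_of_gt hS2)
    exact degen z1 z2 z3
  · -- dual case : h = min (g0, max (g1, g2))
    have hK2 : K2 ≤ 0 := by
      by_contra hcon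
      push_neg at hcon
      have h1 : K1 * S0 ≤ 0 := mpn hK1 hS0.le
      have h2 : 0 < K2 * S2 := mul_pos hcon hS2
      linarith [hA]
    refine ⟨g0, g1, g2, permId g0 g1 g2, Or.inr (Or.inr (Or.inr (main _ ?_ ?_ ?_)))⟩
    · intro θ hθ
      rcases le_total θ (a + π) with hπ | hπ
      · have t1 : 0 ≤ g2 θ - g0 θ := by rw [hd3 θ]; exact mpp hK3 (s0a' θ hθ hπ)
        exact eq_minmax_left (Or.inr (by linarith))
      · have t1 : g0 θ - g1 θ ≤ 0 := by rw [hd1 θ]; exact mpn hK1 (s0b' θ hθ hπ)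
        exact eq_minmax_left (Or.inl (by linarith))
    · intro θ hθ
      have t1 : 0 ≤ g0 θ - g1 θ := by rw [hd1 θ]; exact mpp hK1 (s1b θ hθ)
      have t2 : 0 ≤ g1 θ - g2 θ := by rw [hd2 θ]; exact mnn hK2 (s1c θ hθ)
      exact eq_minmax_mid (by linarith) (by linarith)
    · intro θ hθ
      have t1 : g2 θ - g0 θ ≤ 0 := by rw [hd3 θ]; exact mpn hK3 (s2a θ hθ)
      have t2 : g1 θ - g2 θ ≤ 0 := by rw [hd2 θ]; exact mnp hK2 (s2c θ hθ)
      exact eq_minmax_right (by linarith) (by linarith)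
lemma oneD {a b c C : ℝ} {h g0 g1 g2 : ℝ → ℝ}
    (hab : a < b) (hbc : b < c) (hca : c < a + 2*π)
    (hs0 : Sinu C g0) (hs1 : Sinu C g1) (hs2 : Sinu C g2)
    (hper : ∀ θ, h (θ + 2*π) = h θ)
    (e0 : ∀ θ ∈ Set.Icc a b, h θ = g0 θ)
    (e1 : ∀ θ ∈ Set.Icc b c, h θ = g1 θ)
    (e2 : ∀ θ ∈ Set.Icc c (a+2*π), h θ = g2 θ) :
    GlobConcl h g0 g1 g2 := by
  have p0 := sinu_per hs0
  have p1 := sinu_per hs1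
  have p2 := sinu_per hs2
  -- boundary equalities
  have hbeq : g0 b = g1 b := by
    rw [← e0 b ⟨hab.le, le_refl b⟩, ← e1 b ⟨le_refl b, hbc.le⟩]
  have hceq : g1 c = g2 c := by
    rw [← e1 c ⟨hbc.le, le_refl c⟩, ← e2 c ⟨le_refl c, hca.le⟩]
  have haeq : g2 a = g0 a := by
    have h1 := e2 (a + 2*π) ⟨hca.le, le_refl _⟩
    have h2 := e0 a ⟨le_refl a, hab.le⟩
    have h3 := hper a
    have h4 := p2 a
    rw [h4] at h1
    rw [h3] at h1
    rw [h2] at h1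
    exact h1.symm
  obtain ⟨K1, hd1⟩ := sinu_rep hs0 hs1 hbeq
  obtain ⟨K2, hd2⟩ := sinu_rep hs1 hs2 hceq
  obtain ⟨K3, hd3⟩ := sinu_rep hs2 hs0 haeq
  -- shifted region identities
  have e0' : ∀ θ ∈ Set.Icc (a + 2*π) (b + 2*π), h θ = g0 θ := eqOn_shift hper p0 e0
  have e1' : ∀ θ ∈ Set.Icc (b + 2*π) (c + 2*π), h θ = g1 θ := eqOn_shift hper p1 e1
  -- rotated d-identities
  have hd2' : ∀ θ, g2 θ - g0 θ = K3 * Real.sin (θ - (a + 2*π)) := by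
    intro θ
    have he : θ - (a + 2*π) = (θ - a) - 2*π := by ring
    rw [he, Real.sin_sub_two_pi]
    exact hd3 θ
  have hd1' : ∀ θ, g0 θ - g1 θ = K1 * Real.sin (θ - (b + 2*π)) := by
    intro θ
    have he : θ - (b + 2*π) = (θ - b) - 2*π := by ring
    rw [he, Real.sin_sub_two_pi]
    exact hd1 θ
  rcases lt_or_ge π (b - a) with hL | hL0
  · exact loc_to_glob hper p0 p1 p2
      (caseII hab hbc hca hL hd1 hd2 hd3 e0 e1 e2)
  · rcases lt_or_ge π (c - b) with hL | hL1
    · -- rotate once : base b, functions (g1, g2, g0)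
      have hloc : LocConcl b h g1 g2 g0 :=
        caseII (a := b) (b := c) (c := a + 2*π) hbc hca (by linarith) hL
          hd2 hd2' hd1 e1 e2 (by
            intro θ hθ
            exact e0' θ ⟨hθ.1, by linarith [hθ.2]⟩)
      exact glob_rot (loc_to_glob hper p1 p2 p0 hloc)
    · rcases lt_or_ge π (a + 2*π - c) with hL | hL2
      · -- rotate twice : base c, functions (g2, g0, g1)
        have hloc : LocConcl c h g2 g0 g1 :=
          caseII (a := c) (b := a + 2*π) (c := b + 2*π) hca (by linarith) (by linarith) hL
            hd2' hd1' hd2 e2 (by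
              intro θ hθ
              exact e0' θ hθ) (by
              intro θ hθ
              exact e1' θ ⟨hθ.1, by linarith [hθ.2]⟩)
        exact glob_rot (glob_rot (loc_to_glob hper p2 p0 p1 hloc))
      · exact loc_to_glob hper p0 p1 p2
          (caseI hab hbc hca hL0 hL1 hL2 hd1 hd2 hd3 e0 e1 e2)
section Transfer

def Homog (v : E2) (c : ℝ) (F : E2 → ℝ) : Prop :=
  ∀ (u : E2) (t : ℝ), 0 ≤ t → F (v + t • u) = c + t * (F (v + u) - c)

lemma homog_affine {g : E2 → ℝ} (hg : IsAffineFn g) {v : E2} {c : ℝ} (hc : g v = c) :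
    Homog v c g := by
  intro u t ht
  rw [affine_homog hg v u t, hc]

lemma homog_max {v : E2} {c : ℝ} {F G : E2 → ℝ} (hF : Homog v c F) (hG : Homog v c G) :
    Homog v c (fun x => max (F x) (G x)) := by
  intro u t ht
  simp only
  rw [hF u t ht, hG u t ht]
  rcases le_total (F (v + u)) (G (v + u)) with h | h
  · rw [max_eq_right h, max_eq_right (by nlinarith)]
  · rw [max_eq_left h, max_eq_left (by nlinarith)]

lemma homog_min {v : E2} {c : ℝ} {F G : E2 → ℝ} (hF : Homog v c F) (hG : Homog v c G) :
    Homog v c (fun x => min (F x) (G x)) := by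
  intro u t ht
  simp only
  rw [hF u t ht, hG u t ht]
  rcases le_total (F (v + u)) (G (v + u)) with h | h
  · rw [min_eq_left h, min_eq_left (by nlinarith)]
  · rw [min_eq_right h, min_eq_right (by nlinarith)]

lemma homog_base {v : E2} {c : ℝ} {F : E2 → ℝ} (hF : Homog v c F) : F v = c := by
  have := hF 0 0 (le_refl 0)
  simpa using this

lemma eq_from_circle {v : E2} {c : ℝ} {f F : E2 → ℝ} (hf : Homog v c f) (hF : Homog v c F)
    (hcirc : ∀ θ, f (v + ang θ) = F (v + ang θ)) : ∀ x, f x = F x := by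
  intro x
  rcases eq_or_ne x v with rfl | hx
  · rw [homog_base hf, homog_base hF]
  · obtain ⟨r, θ, hr, hpol⟩ := polar (x - v) (sub_ne_zero_of_ne hx)
    have hx' : x = v + r • ang θ := by rw [← hpol]; abel
    rw [hx', hf (ang θ) r hr.le, hF (ang θ) r hr.le, hcirc θ]

lemma sinu_of_affine {g : E2 → ℝ} (hg : IsAffineFn g) (v : E2) {c : ℝ} (hc : g v = c) :
    Sinu c (fun θ => g (v + ang θ)) := by
  obtain ⟨a, b, hab⟩ := hg
  refine ⟨a 0, a 1, fun θ => ?_⟩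
  simp only [hab, dotProduct, Fin.sum_univ_two, Pi.add_apply, ang_zero, ang_one]
  have hcv : a 0 * v 0 + a 1 * v 1 + b = c := by
    rw [← hc, hab]
    simp [dotProduct, Fin.sum_univ_two]
  linarith [hcv]

lemma final_pack {v : E2} {c : ℝ} {f F0 F1 F2 : E2 → ℝ} {S : Set (E2 → ℝ)}
    (hf : Homog v c f) (h0 : Homog v c F0) (h1 : Homog v c F1) (h2 : Homog v c F2)
    (m0 : F0 ∈ S) (m1 : F1 ∈ S) (m2 : F2 ∈ S)
    (m0n : -F0 ∈ S) (m1n : -F1 ∈ S) (m2n : -F2 ∈ S)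
    (hforms :
      (∀ θ, f (v + ang θ) = max (F0 (v + ang θ)) (max (F1 (v + ang θ)) (F2 (v + ang θ)))) ∨
      (∀ θ, f (v + ang θ) = min (F0 (v + ang θ)) (min (F1 (v + ang θ)) (F2 (v + ang θ)))) ∨
      (∀ θ, f (v + ang θ) = max (F0 (v + ang θ)) (min (F1 (v + ang θ)) (F2 (v + ang θ)))) ∨
      (∀ θ, f (v + ang θ) = min (F0 (v + ang θ)) (max (F1 (v + ang θ)) (F2 (v + ang θ))))) :
    ∃ σ₁ σ₂ : ℝ, (σ₁ = 1 ∨ σ₁ = -1) ∧ (σ₂ = 1 ∨ σ₂ = -1) ∧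
      ∃ g₁ g₂ g₃ : E2 → ℝ, g₁ ∈ S ∧ g₂ ∈ S ∧ g₃ ∈ S ∧
        ∀ x, f x = σ₁ * max (g₁ x) (σ₂ * max (g₂ x) (g₃ x)) := by
  rcases hforms with hform | hform | hform | hform
  · have heq := eq_from_circle hf (homog_max h0 (homog_max h1 h2)) hform
    refine ⟨1, 1, Or.inl rfl, Or.inl rfl, F0, F1, F2, m0, m1, m2, fun x => ?_⟩
    rw [heq x]; ring_nf
  · have heq := eq_from_circle hf (homog_min h0 (homog_min h1 h2)) hform
    refine ⟨-1, 1, Or.inr rfl, Or.inl rfl, -F0, -F1, -F2, m0n, m1n, m2n, fun x => ?_⟩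
    rw [heq x]
    simp only [Pi.neg_apply, one_mul, max_neg_neg, neg_one_mul, max_neg_neg, neg_neg]
  · have heq := eq_from_circle hf (homog_max h0 (homog_min h1 h2)) hform
    refine ⟨1, -1, Or.inl rfl, Or.inr rfl, F0, -F1, -F2, m0, m1n, m2n, fun x => ?_⟩
    rw [heq x]
    simp only [Pi.neg_apply, one_mul, max_neg_neg, neg_one_mul, neg_neg]
  · have heq := eq_from_circle hf (homog_min h0 (homog_max h1 h2)) hform
    refine ⟨-1, -1, Or.inr rfl, Or.inr rfl, -F0, F1, F2, m0n, m1, m2, fun x => ?_⟩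
    rw [heq x]
    simp only [Pi.neg_apply, neg_one_mul, max_neg_neg, neg_neg]

lemma glob_to_pack {v : E2} {c : ℝ} {f f₀ f₁ f₂ : E2 → ℝ} {S : Set (E2 → ℝ)}
    (hf : Homog v c f) (h0 : Homog v c f₀) (h1 : Homog v c f₁) (h2 : Homog v c f₂)
    (m0 : f₀ ∈ S) (m1 : f₁ ∈ S) (m2 : f₂ ∈ S)
    (m0n : -f₀ ∈ S) (m1n : -f₁ ∈ S) (m2n : -f₂ ∈ S)
    (hg : GlobConcl (fun θ => f (v + ang θ)) (fun θ => f₀ (v + ang θ))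
      (fun θ => f₁ (v + ang θ)) (fun θ => f₂ (v + ang θ))) :
    ∃ σ₁ σ₂ : ℝ, (σ₁ = 1 ∨ σ₁ = -1) ∧ (σ₂ = 1 ∨ σ₂ = -1) ∧
      ∃ g₁ g₂ g₃ : E2 → ℝ, g₁ ∈ S ∧ g₂ ∈ S ∧ g₃ ∈ S ∧
        ∀ x, f x = σ₁ * max (g₁ x) (σ₂ * max (g₂ x) (g₃ x)) := by
  obtain ⟨p, q, r, hperm, hforms⟩ := hg
  rcases hperm with ⟨hp,hq,hr⟩|⟨hp,hq,hr⟩|⟨hp,hq,hr⟩|⟨hp,hq,hr⟩|⟨hp,hq,hr⟩|⟨hp,hq,hr⟩ <;>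
    subst hp <;> subst hq <;> subst hr
  · exact final_pack hf h0 h1 h2 m0 m1 m2 m0n m1n m2n hforms
  · exact final_pack hf h0 h2 h1 m0 m2 m1 m0n m2n m1n hforms
  · exact final_pack hf h1 h0 h2 m1 m0 m2 m1n m0n m2n hforms
  · exact final_pack hf h1 h2 h0 m1 m2 m0 m1n m2n m0n hforms
  · exact final_pack hf h2 h0 h1 m2 m0 m1 m2n m0n m1n hforms
  · exact final_pack hf h2 h1 h0 m2 m1 m0 m2n m1n m0n hforms

end Transfer
/-- Every `v`-function with exactly three pieces `P₀, P₁, P₂` with affine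
components `f₀, f₁, f₂` is a signed nested maximum of (signed) affine components. -/
theorem vFunction_three_pieces_max (v : E2) (f : E2 → ℝ) (P₀ P₁ P₂ : Set E2)
    (f₀ f₁ f₂ : E2 → ℝ)
    (hcont : Continuous f)
    (hne₀₁ : P₀ ≠ P₁) (hne₀₂ : P₀ ≠ P₂) (hne₁₂ : P₁ ≠ P₂)
    (Ps : Finset (Set E2)) (hPs : (Ps : Set (Set E2)) = {P₀, P₁, P₂})
    (hadm : IsAdmissible f Ps)
    (hcone : ∀ P ∈ Ps, IsConeWithApex v P)
    (haff₀ : IsAffineFn f₀) (haff₁ : IsAffineFn f₁) (haff₂ : IsAffineFn f₂)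
    (hcomp₀ : EqOn f f₀ P₀) (hcomp₁ : EqOn f f₁ P₁) (hcomp₂ : EqOn f f₂ P₂) :
    ∃ σ₁ σ₂ : ℝ, (σ₁ = 1 ∨ σ₁ = -1) ∧ (σ₂ = 1 ∨ σ₂ = -1) ∧
      ∃ g₁ g₂ g₃ : E2 → ℝ,
        g₁ ∈ ({f₀, f₁, f₂, -f₀, -f₁, -f₂} : Set (E2 → ℝ)) ∧
        g₂ ∈ ({f₀, f₁, f₂, -f₀, -f₁, -f₂} : Set (E2 → ℝ)) ∧
        g₃ ∈ ({f₀, f₁, f₂, -f₀, -f₁, -f₂} : Set (E2 → ℝ)) ∧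
        ∀ x, f x = σ₁ * max (g₁ x) (σ₂ * max (g₂ x) (g₃ x)) := by
  obtain ⟨hpoly, hcov, hpair, -⟩ := hadm
  have hP0 : P₀ ∈ Ps := by
    rw [← Finset.mem_coe, hPs]; exact Set.mem_insert _ _
  have hP1 : P₁ ∈ Ps := by
    rw [← Finset.mem_coe, hPs]; exact Set.mem_insert_of_mem _ (Set.mem_insert _ _)
  have hP2 : P₂ ∈ Ps := by
    rw [← Finset.mem_coe, hPs]
    exact Set.mem_insert_of_mem _ (Set.mem_insert_of_mem _ rfl)
  have hpoly0 := hpoly P₀ hP0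
  have hpoly1 := hpoly P₁ hP1
  have hpoly2 := hpoly P₂ hP2
  have hcone0 := hcone P₀ hP0
  have hcone1 := hcone P₁ hP1
  have hcone2 := hcone P₂ hP2
  -- cover
  have hcov3 : ∀ x : E2, x ∈ P₀ ∨ x ∈ P₁ ∨ x ∈ P₂ := by
    intro x
    have hx : x ∈ ⋃ P ∈ Ps, P := by rw [hcov]; trivial
    obtain ⟨P, hPmem, hxP⟩ := Set.mem_iUnion₂.mp hx
    have : P ∈ ({P₀, P₁, P₂} : Set (Set E2)) := by rw [← hPs]; exact hPmem
    rcases this with rfl | rfl | rfl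
    · exact Or.inl hxP
    · exact Or.inr (Or.inl hxP)
    · exact Or.inr (Or.inr hxP)
  -- v belongs to each piece
  have hvmem : ∀ P ∈ Ps, IsPolygonalPiece P → v ∈ P := by
    intro P hPm hpolyP
    obtain ⟨x, hx⟩ := hpolyP.2.1
    have := hcone P hPm x (interior_subset hx) 0 (le_refl 0)
    simpa using this
  have hv0 : v ∈ P₀ := hvmem P₀ hP0 hpoly0
  have hv1 : v ∈ P₁ := hvmem P₁ hP1 hpoly1
  have hv2 : v ∈ P₂ := hvmem P₂ hP2 hpoly2
  have hf0v : f₀ v = f v := (hcomp₀ hv0).symm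
  have hf1v : f₁ v = f v := (hcomp₁ hv1).symm
  have hf2v : f₂ v = f v := (hcomp₂ hv2).symm
  -- interiors are disjoint from other pieces
  have hint : ∀ P ∈ Ps, ∀ Q ∈ Ps, P ≠ Q → ∀ x, x ∈ interior P → x ∈ Q → False := by
    intro P hPm Q hQm hne x hxint hxQ
    have hx : x ∈ P ∩ Q := ⟨interior_subset hxint, hxQ⟩
    rw [hpair P hPm Q hQm hne] at hx
    have hfr : x ∈ frontier P := hx.1
    rw [(hpoly P hPm).1.frontier_eq] at hfr
    exact hfr.2 hxint
  have hvint0 : v ∉ interior P₀ := fun h => hint P₀ hP0 P₁ hP1 hne₀₁ v h hv1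
  have hvint1 : v ∉ interior P₁ := fun h => hint P₁ hP1 P₀ hP0 hne₀₁.symm v h hv0
  have hvint2 : v ∉ interior P₂ := fun h => hint P₂ hP2 P₀ hP0 hne₀₂.symm v h hv0
  -- directional sets
  have hDne : ∀ P ∈ Ps, IsPolygonalPiece P → v ∉ interior P → (dirD v P).Nonempty := by
    intro P hPm hpolyP hvint
    obtain ⟨x, hx⟩ := hpolyP.2.1
    have hxv : x ≠ v := fun h => hvint (h ▸ hx)
    obtain ⟨r, θ, hr, hpol⟩ := polar (x - v) (sub_ne_zero_of_ne hxv)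
    exact ⟨θ, dirD_of_polar v (hcone P hPm) hx hr (by rw [← hpol]; abel)⟩
  have hdisjAD : ∀ P ∈ Ps, ∀ Q ∈ Ps, P ≠ Q → dirA v P ∩ dirD v Q = ∅ := by
    intro P hPm Q hQm hne
    apply Set.eq_empty_iff_forall_notMem.mpr
    rintro θ ⟨hθA, hθD⟩
    exact hint Q hQm P hPm hne.symm _ hθD hθA
  -- arc structure
  obtain ⟨a, b, c', h1, h2, h3, hIcc0, hcase⟩ :=
    arc_structure (dirA v P₀) (dirA v P₁) (dirA v P₂) (dirD v P₀) (dirD v P₁) (dirD v P₂)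
      (dirA_closed v P₀ hpoly0.1) (dirA_closed v P₁ hpoly1.1) (dirA_closed v P₂ hpoly2.1)
      (dirD_open v P₀) (dirD_open v P₁) (dirD_open v P₂)
      (dirA_per v P₀) (dirD_per v P₀) (dirD_per v P₁) (dirD_per v P₂)
      (dirD_subset_dirA v P₀) (dirD_subset_dirA v P₁) (dirD_subset_dirA v P₂)
      (hdisjAD P₀ hP0 P₁ hP1 hne₀₁) (hdisjAD P₀ hP0 P₂ hP2 hne₀₂)
      (hdisjAD P₁ hP1 P₀ hP0 hne₀₁.symm) (hdisjAD P₁ hP1 P₂ hP2 hne₁₂)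
      (hdisjAD P₂ hP2 P₀ hP0 hne₀₂.symm) (hdisjAD P₂ hP2 P₁ hP1 hne₁₂.symm)
      (dirA_subset_closure_dirD v hcone0 hpoly0.2.2.2.1)
      (dirA_subset_closure_dirD v hcone1 hpoly1.2.2.2.1)
      (dirA_subset_closure_dirD v hcone2 hpoly2.2.2.2.1)
      (hDne P₀ hP0 hpoly0 hvint0) (hDne P₁ hP1 hpoly1 hvint1) (hDne P₂ hP2 hpoly2 hvint2)
      (dir_conn v hcone0 hpoly0.2.2.1.isPreconnected hvint0)
      (dir_conn v hcone1 hpoly1.2.2.1.isPreconnected hvint1)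
      (dir_conn v hcone2 hpoly2.2.2.1.isPreconnected hvint2)
      (fun θ => hcov3 (v + ang θ))
  -- circle functions
  have hperh : ∀ θ, f (v + ang (θ + 2*π)) = f (v + ang θ) := by
    intro θ; rw [ang_add_two_pi]
  have hs0 : Sinu (f v) (fun θ => f₀ (v + ang θ)) := sinu_of_affine haff₀ v hf0v
  have hs1 : Sinu (f v) (fun θ => f₁ (v + ang θ)) := sinu_of_affine haff₁ v hf1v
  have hs2 : Sinu (f v) (fun θ => f₂ (v + ang θ)) := sinu_of_affine haff₂ v hf2v
  -- homogeneity of f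
  have hfHom : Homog v (f v) f := by
    intro u t ht
    have hmem := hcov3 (v + u)
    have hscale : ∀ {P : Set E2}, P ∈ Ps → v + u ∈ P → v + t • u ∈ P := by
      intro P hPm hvu
      have := hcone P hPm (v + u) hvu t ht
      rwa [add_sub_cancel_left] at this
    rcases hmem with hm | hm | hm
    · rw [hcomp₀ (hscale hP0 hm), hcomp₀ hm, ← hf0v, affine_homog haff₀ v u t]
    · rw [hcomp₁ (hscale hP1 hm), hcomp₁ hm, ← hf1v, affine_homog haff₁ v u t]
    · rw [hcomp₂ (hscale hP2 hm), hcomp₂ hm, ← hf2v, affine_homog haff₂ v u t]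
  have hHom0 : Homog v (f v) f₀ := homog_affine haff₀ hf0v
  have hHom1 : Homog v (f v) f₁ := homog_affine haff₁ hf1v
  have hHom2 : Homog v (f v) f₂ := homog_affine haff₂ hf2v
  -- memberships
  set S : Set (E2 → ℝ) := {f₀, f₁, f₂, -f₀, -f₁, -f₂} with hS
  have m0 : f₀ ∈ S := by rw [hS]; exact Set.mem_insert _ _
  have m1 : f₁ ∈ S := by rw [hS]; simp only [Set.mem_insert_iff]; tauto
  have m2 : f₂ ∈ S := by rw [hS]; simp only [Set.mem_insert_iff]; tauto
  have m0n : -f₀ ∈ S := by rw [hS]; simp only [Set.mem_insert_iff]; tauto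
  have m1n : -f₁ ∈ S := by rw [hS]; simp only [Set.mem_insert_iff]; tauto
  have m2n : -f₂ ∈ S := by rw [hS]; simp only [Set.mem_insert_iff, Set.mem_singleton_iff]; tauto
  have e0 : ∀ θ ∈ Set.Icc a b, f (v + ang θ) = f₀ (v + ang θ) :=
    fun θ hθ => hcomp₀ (hIcc0 hθ)
  rcases hcase with ⟨hIcc1, hIcc2⟩ | ⟨hIcc1, hIcc2⟩
  · have e1 : ∀ θ ∈ Set.Icc b c', f (v + ang θ) = f₁ (v + ang θ) :=
      fun θ hθ => hcomp₁ (hIcc1 hθ)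
    have e2 : ∀ θ ∈ Set.Icc c' (a + 2*π), f (v + ang θ) = f₂ (v + ang θ) :=
      fun θ hθ => hcomp₂ (hIcc2 hθ)
    have hg := oneD h1 h2 h3 hs0 hs1 hs2 hperh e0 e1 e2
    exact glob_to_pack hfHom hHom0 hHom1 hHom2 m0 m1 m2 m0n m1n m2n hg
  · have e1 : ∀ θ ∈ Set.Icc b c', f (v + ang θ) = f₂ (v + ang θ) :=
      fun θ hθ => hcomp₂ (hIcc1 hθ)
    have e2 : ∀ θ ∈ Set.Icc c' (a + 2*π), f (v + ang θ) = f₁ (v + ang θ) :=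
      fun θ hθ => hcomp₁ (hIcc2 hθ)
    have hg := oneD h1 h2 h3 hs0 hs2 hs1 hperh e0 e1 e2
    exact glob_to_pack hfHom hHom0 hHom1 hHom2 m0 m1 m2 m0n m1n m2n (glob_swap hg)
end
end

section
/- Let f₁, f₂, f₃ : ℝ² → ℝ be affine functions and let σ₁, σ₂ ∈ {−1, 1}. Then there exist affine maps S₁ : ℝ² → ℝ⁵, S₂ : ℝ⁵ → ℝ³ and S₃ : ℝ³ → ℝ such that for all x ∈ ℝ²: σ₁ · max( f₁(x), σ₂ · max( f₂(x), f₃(x) ) ) = S₃( ρ( S₂( ρ( S₁(x) ) ) ) ). That is, each signed nested maximum of three affine functions is represented by a ReLU network with two hidden layers of widths 5 and 3. -/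
open Set

noncomputable section

/-- Each signed nested maximum of three affine functions is represented
by a ReLU network with two hidden layers of widths 5 and 3. -/
theorem signed_max_relu_network (f₁ f₂ f₃ : E2 → ℝ)
    (h₁ : IsAffineFn f₁) (h₂ : IsAffineFn f₂) (h₃ : IsAffineFn f₃)
    (σ₁ σ₂ : ℝ) (hσ₁ : σ₁ = 1 ∨ σ₁ = -1) (hσ₂ : σ₂ = 1 ∨ σ₂ = -1) :
    ∃ (S₁ : E2 → (Fin 5 → ℝ)) (S₂ : (Fin 5 → ℝ) → (Fin 3 → ℝ)) (S₃ : (Fin 3 → ℝ) → ℝ),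
      (∃ (A : Matrix (Fin 5) (Fin 2) ℝ) (b : Fin 5 → ℝ), ∀ x, S₁ x = A.mulVec x + b) ∧
      (∃ (A : Matrix (Fin 3) (Fin 5) ℝ) (b : Fin 3 → ℝ), ∀ x, S₂ x = A.mulVec x + b) ∧
      (∃ (a : Fin 3 → ℝ) (b : ℝ), ∀ x, S₃ x = dotProduct a x + b) ∧
      ∀ x, σ₁ * max (f₁ x) (σ₂ * max (f₂ x) (f₃ x)) = S₃ (relu (S₂ (relu (S₁ x)))) := by
  obtain ⟨a₁, b₁, hf₁⟩ := h₁
  obtain ⟨a₂, b₂, hf₂⟩ := h₂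
  obtain ⟨a₃, b₃, hf₃⟩ := h₃
  refine ⟨fun x => ![f₂ x - f₃ x, f₃ x, -f₃ x, f₁ x, -f₁ x],
    fun y => ![y 3 - y 4 - σ₂ * (y 0 + y 1 - y 2), σ₂ * (y 0 + y 1 - y 2),
      -(σ₂ * (y 0 + y 1 - y 2))],
    fun z => σ₁ * (z 0 + z 1 - z 2), ?_, ?_, ?_, ?_⟩
  · refine ⟨![a₂ - a₃, a₃, -a₃, a₁, -a₁], ![b₂ - b₃, b₃, -b₃, b₁, -b₁], fun x => ?_⟩
    funext i
    fin_cases i <;>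
      simp [Matrix.mulVec, dotProduct, Fin.sum_univ_two, hf₁, hf₂, hf₃] <;> ring
  · refine ⟨![![-σ₂, -σ₂, σ₂, 1, -1], ![σ₂, σ₂, -σ₂, 0, 0], ![-σ₂, -σ₂, σ₂, 0, 0]],
      0, fun y => ?_⟩
    funext i
    fin_cases i <;>
      simp [Matrix.mulVec, dotProduct, Fin.sum_univ_five] <;> ring
  · refine ⟨![σ₁, σ₁, -σ₁], 0, fun z => ?_⟩
    simp [dotProduct, Fin.sum_univ_three]
    ring
  · intro x
    have key : ∀ t : ℝ, max 0 t - max 0 (-t) = t := by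
      intro t
      rcases le_total 0 t with h | h
      · rw [max_eq_right h, max_eq_left (neg_nonpos.mpr h)]; ring
      · rw [max_eq_left h, max_eq_right (neg_nonneg.mpr h)]; ring
    have key2 : ∀ u v : ℝ, max 0 (u - v) + v = max u v := by
      intro u v
      rcases le_total u v with h | h
      · rw [max_eq_right h, max_eq_left (sub_nonpos.mpr h)]; ring
      · rw [max_eq_left h, max_eq_right (sub_nonneg.mpr h)]; ring
    simp only [relu]
    simp only [Matrix.cons_val_zero, Matrix.cons_val_one, Matrix.head_cons,
      Matrix.cons_val_two, Matrix.cons_val_three, Matrix.cons_val_four,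
      Matrix.tail_cons, Matrix.head_fin_const]
    have e0 : max 0 (f₁ x) - max 0 (-f₁ x) = f₁ x := key _
    have e1 : max 0 (f₂ x - f₃ x) + max 0 (f₃ x) - max 0 (-f₃ x) = max (f₂ x) (f₃ x) := by
      have h1 := key (f₃ x); have h2 := key2 (f₂ x) (f₃ x); linarith
    rw [e0, e1]
    set m := σ₂ * max (f₂ x) (f₃ x) with hm
    rw [show max 0 (f₁ x - m) + max 0 m - max 0 (-m) = max (f₁ x) m from by
      have h1 := key m; have h2 := key2 (f₁ x) m; linarith]
end
end
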